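/- arXiv:1307.7721 — 7 statements merged into one kernel-verified Lean document; each statement's English description precedes it below -/
import Mathlib

section
/- Let μ be an atomless probability measure on ℝ with finite second moment. Then the set V_μ = {v ∈ L²(μ) : v = F_ν⁻ ∘ F_μ − id μ-a.e. for some ν ∈ W₂(ℝ)} is a closed convex subset of the Hilbert space L²(μ). -/
open MeasureTheory

noncomputable section

/-- `ν` has a finite second moment. -/
def FinSecondMoment (ν : Measure ℝ) : Prop :=
  ∫⁻ x, ENNReal.ofReal (x ^ 2) ∂ν < ⊤

/-- `ν ∈ W₂(ℝ)`: a Borel probability measure on `ℝ` with finite second moment. -/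
def MemW2 (ν : Measure ℝ) : Prop :=
  IsProbabilityMeasure ν ∧ FinSecondMoment ν

/-- `π` is a coupling of `ν₁` and `ν₂`. -/
def IsCoupling (π : Measure (ℝ × ℝ)) (ν₁ ν₂ : Measure ℝ) : Prop :=
  IsProbabilityMeasure π ∧ π.map Prod.fst = ν₁ ∧ π.map Prod.snd = ν₂

/-- The quadratic Wasserstein distance. -/
noncomputable def Wdist (ν₁ ν₂ : Measure ℝ) : ℝ :=
  Real.sqrt (⨅ π : {π : Measure (ℝ × ℝ) // IsCoupling π ν₁ ν₂},
      ∫⁻ p, ENNReal.ofReal ((p.1 - p.2) ^ 2) ∂(π.1)).toReal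

/-- The cumulative distribution function of `ν`. -/
def cdf' (ν : Measure ℝ) (x : ℝ) : ℝ := (ν (Set.Iic x)).toReal

/-- The quantile function of `ν`. -/
noncomputable def quantile (ν : Measure ℝ) (y : ℝ) : ℝ := sInf {x : ℝ | y ≤ cdf' ν x}

/-- The logarithmic map at `μ`: `log_μ(ν) = F_ν⁻ ∘ F_μ - id`. -/
noncomputable def logMap (μ ν : Measure ℝ) : ℝ → ℝ := fun x => quantile ν (cdf' μ x) - x

/-- The exponential map at `μ`: `exp_μ(v) = (id + v) # μ`. -/
noncomputable def expMap (μ : Measure ℝ) (v : ℝ → ℝ) : Measure ℝ := μ.map fun x => x + v x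

/-- `μ` is atomless. -/
def Atomless (μ : Measure ℝ) : Prop := ∀ x : ℝ, μ {x} = 0


/-- `V_μ = log_μ(W₂(ℝ))`, as a subset of `L²(μ)`. -/
def Vmu (μ : Measure ℝ) : Set (Lp ℝ 2 μ) :=
  {v | ∃ ν : Measure ℝ, MemW2 ν ∧ ⇑v =ᵐ[μ] logMap μ ν}


open Filter Set Topology
open scoped ENNReal NNReal Classical

section Aux
section aux
variable {ν : Measure ℝ} {y z : ℝ}

lemma cdf'_mono [IsFiniteMeasure ν] : Monotone (cdf' ν) := fun a b hab =>
  ENNReal.toReal_mono (measure_ne_top ν _) (measure_mono (Iic_subset_Iic.2 hab))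

lemma cdf'_eq_iff [IsProbabilityMeasure ν] {c : ENNReal} (hc : c ≠ ⊤) :
    cdf' ν z = c.toReal ↔ ν (Iic z) = c := by
  constructor
  · intro h
    exact (ENNReal.toReal_eq_toReal_iff' (measure_ne_top ν _) hc).1 h
  · intro h; rw [cdf', h]

lemma tendsto_cdf'_atTop [IsProbabilityMeasure ν] : Tendsto (cdf' ν) atTop (𝓝 1) := by
  have h := tendsto_measure_Iic_atTop (μ := ν)
  rw [measure_univ] at h
  have := (ENNReal.tendsto_toReal (by norm_num : (1:ENNReal) ≠ ⊤)).comp h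
  exact this

lemma tendsto_cdf'_int_atBot [IsProbabilityMeasure ν] :
    Tendsto (fun n : ℕ => ν (Iic (-(n:ℝ)))) atTop (𝓝 0) := by
  have h : Tendsto (fun n : ℕ => ν (Iic (-(n:ℝ)))) atTop (𝓝 (ν (⋂ n : ℕ, Iic (-(n:ℝ))))) := by
    refine tendsto_measure_iInter_atTop (fun n => (measurableSet_Iic).nullMeasurableSet)
      (fun a b hab => Iic_subset_Iic.2 (by have : (a:ℝ) ≤ b := Nat.cast_le.2 hab; linarith))
      ⟨0, measure_ne_top ν _⟩
  have : (⋂ n : ℕ, Iic (-(n:ℝ))) = ∅ := by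
    ext x; simp only [mem_iInter, mem_Iic, mem_empty_iff_false, iff_false, not_forall, not_le]
    obtain ⟨n, hn⟩ := exists_nat_gt (-x)
    exact ⟨n, by linarith⟩
  rwa [this, measure_empty] at h

lemma bddBelow_quantile_set [IsProbabilityMeasure ν] (hy : 0 < y) :
    BddBelow {x : ℝ | y ≤ cdf' ν x} := by
  obtain ⟨n, hn⟩ : ∃ n : ℕ, ν (Iic (-(n:ℝ))) < ENNReal.ofReal y := by
    have := tendsto_cdf'_int_atBot (ν := ν)
    have h2 := this.eventually_lt_const (by positivity : (0:ENNReal) < ENNReal.ofReal y)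
    exact h2.exists
  refine ⟨-(n:ℝ), fun x hx => ?_⟩
  by_contra h
  push_neg at h
  have : cdf' ν x ≤ cdf' ν (-(n:ℝ)) := cdf'_mono h.le
  have h3 : cdf' ν (-(n:ℝ)) < y := by
    have := ENNReal.toReal_lt_toReal (measure_ne_top ν _) (by simp : ENNReal.ofReal y ≠ ⊤) |>.2 hn
    rwa [ENNReal.toReal_ofReal hy.le] at this
  have hx' : y ≤ cdf' ν x := hx
  linarith

lemma nonempty_quantile_set [IsProbabilityMeasure ν] (hy : y < 1) :
    {x : ℝ | y ≤ cdf' ν x}.Nonempty := by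
  have := tendsto_cdf'_atTop (ν := ν)
  have h2 := this.eventually_const_lt hy
  obtain ⟨x, hx⟩ := h2.exists
  exact ⟨x, hx.le⟩

lemma quantile_le [IsProbabilityMeasure ν] (hy : 0 < y) (h : y ≤ cdf' ν z) :
    quantile ν y ≤ z := csInf_le (bddBelow_quantile_set hy) h

lemma le_quantile [IsProbabilityMeasure ν] (hne : {x : ℝ | y ≤ cdf' ν x}.Nonempty)
    (h : ∀ x, y ≤ cdf' ν x → z ≤ x) : z ≤ quantile ν y := le_csInf hne h

lemma quantile_mono [IsProbabilityMeasure ν] {y₁ y₂ : ℝ} (h1 : 0 < y₁) (h2 : y₂ < 1)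
    (h : y₁ ≤ y₂) : quantile ν y₁ ≤ quantile ν y₂ := by
  exact le_quantile (nonempty_quantile_set h2) (fun x hx => quantile_le h1 (le_trans h hx))

end aux

section Null
variable {μ : Measure ℝ}


lemma null_of_forall_null_inter_Iic (C : Set ℝ)
    (h : ∀ x ∈ C, μ (C ∩ Iic x) = 0) : μ C = 0 := by
  by_cases hm : ∃ m ∈ C, ∀ x ∈ C, x ≤ m
  · obtain ⟨m, hmC, hm⟩ := hm
    have hC : C = C ∩ Iic m := subset_antisymm (fun x hx => ⟨hx, hm x hx⟩) inter_subset_left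
    rw [hC]; exact h m hmC
  · push_neg at hm
    set U : ℚ → Set ℝ := fun q =>
      if hq : ∃ x ∈ C, (q : ℝ) ≤ x then C ∩ Iic hq.choose else ∅ with hU
    have hUnull : ∀ q, μ (U q) = 0 := by
      intro q
      by_cases hq : ∃ x ∈ C, (q : ℝ) ≤ x
      · rw [hU]; simp only [dif_pos hq]; exact h _ hq.choose_spec.1
      · rw [hU]; simp only [dif_neg hq]; exact measure_empty
    have hsub : C ⊆ ⋃ q : ℚ, U q := by
      intro x hx
      obtain ⟨x', hx'C, hxx'⟩ := hm x hx
      obtain ⟨q, hq1, hq2⟩ := exists_rat_btwn hxx'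
      refine mem_iUnion.2 ⟨q, ?_⟩
      have hq : ∃ y ∈ C, (q : ℝ) ≤ y := ⟨x', hx'C, hq2.le⟩
      rw [hU]; simp only [dif_pos hq]
      exact ⟨hx, le_trans hq1.le hq.choose_spec.2⟩
    exact measure_mono_null hsub (measure_iUnion_null hUnull)

lemma null_of_forall_null_inter_Ici (C : Set ℝ)
    (h : ∀ x ∈ C, μ (C ∩ Ici x) = 0) : μ C = 0 := by
  by_cases hm : ∃ m ∈ C, ∀ x ∈ C, m ≤ x
  · obtain ⟨m, hmC, hm⟩ := hm
    have hC : C = C ∩ Ici m := subset_antisymm (fun x hx => ⟨hx, hm x hx⟩) inter_subset_left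
    rw [hC]; exact h m hmC
  · push_neg at hm
    set U : ℚ → Set ℝ := fun q =>
      if hq : ∃ x ∈ C, x ≤ (q : ℝ) then C ∩ Ici hq.choose else ∅ with hU
    have hUnull : ∀ q, μ (U q) = 0 := by
      intro q
      by_cases hq : ∃ x ∈ C, x ≤ (q : ℝ)
      · rw [hU]; simp only [dif_pos hq]; exact h _ hq.choose_spec.1
      · rw [hU]; simp only [dif_neg hq]; exact measure_empty
    have hsub : C ⊆ ⋃ q : ℚ, U q := by
      intro x hx
      obtain ⟨x', hx'C, hxx'⟩ := hm x hx
      obtain ⟨q, hq1, hq2⟩ := exists_rat_btwn hxx'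
      refine mem_iUnion.2 ⟨q, ?_⟩
      have hq : ∃ y ∈ C, y ≤ (q : ℝ) := ⟨x', hx'C, hq1.le⟩
      rw [hU]; simp only [dif_pos hq]
      exact ⟨hx, le_trans hq.choose_spec.2 hq2.le⟩
    exact measure_mono_null hsub (measure_iUnion_null hUnull)

lemma null_cdf_zero : μ {x | μ (Iic x) = 0} = 0 := by
  refine null_of_forall_null_inter_Iic _ (fun x hx => measure_mono_null inter_subset_right hx)

lemma null_Ioi_zero (hμa : ∀ x : ℝ, μ {x} = 0) : μ {x | μ (Ioi x) = 0} = 0 := by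
  refine null_of_forall_null_inter_Ici _ (fun x hx => ?_)
  have : μ (Ici x) = 0 := by
    rw [← Ioi_union_left, measure_union_null_iff]
    exact ⟨hx, hμa x⟩
  exact measure_mono_null inter_subset_right this

lemma null_flat_right : μ {x | ∃ c, c < x ∧ μ (Ioc c x) = 0} = 0 := by
  have hsub : {x | ∃ c, c < x ∧ μ (Ioc c x) = 0} ⊆
      ⋃ q : ℚ, {x | (q : ℝ) < x ∧ μ (Ioc (q : ℝ) x) = 0} := by
    rintro x ⟨c, hcx, hnull⟩
    obtain ⟨q, hq1, hq2⟩ := exists_rat_btwn hcx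
    refine mem_iUnion.2 ⟨q, hq2, measure_mono_null (Ioc_subset_Ioc_left hq1.le) hnull⟩
  refine measure_mono_null hsub (measure_iUnion_null fun q => ?_)
  refine null_of_forall_null_inter_Iic _ (fun x hx => ?_)
  refine measure_mono_null (fun z hz => ?_) hx.2
  exact ⟨hz.1.1, hz.2⟩


lemma cdf'_pos [IsProbabilityMeasure μ] {x : ℝ} (h : μ (Iic x) ≠ 0) : 0 < cdf' μ x :=
  ENNReal.toReal_pos h (measure_ne_top μ _)

lemma cdf'_lt_one [IsProbabilityMeasure μ] {x : ℝ} (h : μ (Ioi x) ≠ 0) : cdf' μ x < 1 := by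
  have hsum : μ (Iic x) + μ (Ioi x) = 1 := by
    have := measure_add_measure_compl (μ := μ) (measurableSet_Iic (a := x))
    rwa [compl_Iic, measure_univ] at this
  have hlt : μ (Iic x) < 1 := by
    by_contra hge
    push_neg at hge
    have h1 : μ (Iic x) = 1 := le_antisymm prob_le_one hge
    rw [h1] at hsum
    exact h (by simpa using (ENNReal.add_right_inj (by norm_num)).1 (hsum.trans (add_zero 1).symm))
  have := ENNReal.toReal_lt_toReal (measure_ne_top μ _) (by norm_num : (1:ENNReal) ≠ ⊤) |>.2 hlt
  simpa [cdf'] using this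

theorem dirA [IsProbabilityMeasure μ] [IsProbabilityMeasure ν] (hμa : ∀ x : ℝ, μ {x} = 0)
    (v : ℝ → ℝ) (hv : v =ᵐ[μ] logMap μ ν)
    (hz : μ {x | μ (Iic x) = 0} = 0) (ho : μ {x | μ (Ioi x) = 0} = 0) :
    ∃ s : Set ℝ, μ sᶜ = 0 ∧ MonotoneOn (fun x => v x + x) s := by
  set s := {x | v x = logMap μ ν x} ∩ ({x | μ (Iic x) = 0} ∪ {x | μ (Ioi x) = 0})ᶜ with hs
  refine ⟨s, ?_, ?_⟩
  · rw [hs, compl_inter, compl_compl]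
    refine measure_union_null ?_ (measure_union_null hz ho)
    have := hv
    rw [Filter.EventuallyEq, ae_iff] at this
    exact this
  · rintro x ⟨hxv, hx⟩ y ⟨hyv, hy⟩ hxy
    simp only [mem_compl_iff, mem_union, mem_setOf_eq, not_or] at hx hy
    have hvx : v x = quantile ν (cdf' μ x) - x := hxv
    have hvy : v y = quantile ν (cdf' μ y) - y := hyv
    simp only [hvx, hvy, sub_add_cancel]
    exact quantile_mono (cdf'_pos hx.1) (cdf'_lt_one hy.2) (cdf'_mono hxy)


/-- Core identity: if `g` is monotone on a conull set `s` and `ν = g_*μ`, then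
`quantile ν (cdf' μ x) = g x` for a.e. `x`. -/
theorem core_identity [IsProbabilityMeasure μ] (hμa : ∀ x : ℝ, μ {x} = 0)
    {g : ℝ → ℝ} (hg : Measurable g) {s : Set ℝ} (hs : μ sᶜ = 0)
    (hmono : MonotoneOn g s) :
    ∀ᵐ x ∂μ, quantile (μ.map g) (cdf' μ x) = g x := by
  classical
  haveI : NoAtoms μ := ⟨hμa⟩
  set ν := μ.map g with hν
  haveI : IsProbabilityMeasure ν := Measure.isProbabilityMeasure_map hg.aemeasurable
  have hmap : ∀ z : ℝ, ν (Iic z) = μ (g ⁻¹' Iic z) := fun z =>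
    Measure.map_apply hg measurableSet_Iic
  -- the jump set
  set J := {x ∈ s | ∃ z, z < g x ∧ ∀ c ∈ s, c < x → g c ≤ z} with hJ
  have hJc : J.Countable := by
    have hch : ∀ x ∈ J, ∃ q : ℚ, ∃ z : ℝ, z < (q:ℝ) ∧ (q:ℝ) < g x ∧
        ∀ c ∈ s, c < x → g c ≤ z := by
      rintro x ⟨hxs, z, hzgx, hzc⟩
      obtain ⟨q, hq1, hq2⟩ := exists_rat_btwn hzgx
      exact ⟨q, z, hq1, hq2, hzc⟩
    set f : ℝ → ℚ := fun x => if hx : x ∈ J then (hch x hx).choose else 0 with hf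
    refine MapsTo.countable_of_injOn (f := f) (t := univ) (fun x _ => trivial) ?_
      countable_univ
    intro x hx x' hx' hfe
    by_contra hne
    rcases lt_or_gt_of_ne hne with hlt | hlt
    · -- x < x' : f x < g x ≤ z' < f x'
      obtain ⟨z, hz1, hz2, hz3⟩ := (hch x hx).choose_spec
      obtain ⟨z', hz'1, hz'2, hz'3⟩ := (hch x' hx').choose_spec
      have hgs : g x ≤ z' := hz'3 x hx.1 hlt
      have : (f x : ℝ) < f x' := by
        rw [hf]; simp only [dif_pos hx, dif_pos hx']
        calc ((hch x hx).choose : ℝ) < g x := hz2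
          _ ≤ z' := hgs
          _ < (hch x' hx').choose := hz'1
      rw [hfe] at this; exact lt_irrefl _ this
    · obtain ⟨z, hz1, hz2, hz3⟩ := (hch x hx).choose_spec
      obtain ⟨z', hz'1, hz'2, hz'3⟩ := (hch x' hx').choose_spec
      have hgs : g x' ≤ z := hz3 x' hx'.1 hlt
      have : (f x' : ℝ) < f x := by
        rw [hf]; simp only [dif_pos hx, dif_pos hx']
        calc ((hch x' hx').choose : ℝ) < g x' := hz'2
          _ ≤ z := hgs
          _ < (hch x hx).choose := hz1
      rw [hfe] at this; exact lt_irrefl _ this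
  have hJnull : μ J = 0 := by haveI : NullSingletonClass μ := ⟨hμa⟩; exact hJc.measure_zero μ
  -- flats
  have hFnull : μ {x | ∃ c, c < x ∧ μ (Ioc c x) = 0} = 0 := null_flat_right
  -- combine bad sets
  have hbad : μ (sᶜ ∪ ({x | μ (Iic x) = 0} ∪ ({x | ∃ c, c < x ∧ μ (Ioc c x) = 0} ∪ J))) = 0 :=
    measure_union_null hs (measure_union_null null_cdf_zero (measure_union_null hFnull hJnull))
  rw [ae_iff]
  refine measure_mono_null ?_ hbad
  intro x hx
  simp only [mem_setOf_eq] at hx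
  by_contra hxbad
  simp only [mem_union, mem_compl_iff, not_or] at hxbad
  obtain ⟨hxs, hxz, hxf, hxJ⟩ := hxbad
  rw [not_not] at hxs
  apply hx
  have hy : 0 < cdf' μ x := ENNReal.toReal_pos hxz (measure_ne_top μ _)
  -- (≤)
  have hle : quantile ν (cdf' μ x) ≤ g x := by
    refine quantile_le hy ?_
    have hsub : Iic x ∩ s ⊆ g ⁻¹' Iic (g x) := by
      rintro w ⟨hw1, hw2⟩
      exact hmono hw2 hxs hw1
    have : μ (Iic x) ≤ ν (Iic (g x)) := by
      rw [hmap]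
      calc μ (Iic x) = μ (Iic x ∩ s) := (measure_inter_conull hs).symm
        _ ≤ μ (g ⁻¹' Iic (g x)) := measure_mono hsub
    exact ENNReal.toReal_mono (measure_ne_top ν _) this
  -- (≥)
  have hmem : cdf' μ x ≤ cdf' ν (g x) := by
    -- re-derive for nonemptiness
    have hsub : Iic x ∩ s ⊆ g ⁻¹' Iic (g x) := fun w hw => hmono hw.2 hxs hw.1
    have : μ (Iic x) ≤ ν (Iic (g x)) := by
      rw [hmap]
      calc μ (Iic x) = μ (Iic x ∩ s) := (measure_inter_conull hs).symm
        _ ≤ μ (g ⁻¹' Iic (g x)) := measure_mono hsub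
    exact ENNReal.toReal_mono (measure_ne_top ν _) this
  have hge : g x ≤ quantile ν (cdf' μ x) := by
    refine le_quantile ⟨g x, hmem⟩ ?_
    intro z hz
    by_contra hzx
    push_neg at hzx
    -- μ (Iic x) ≤ ν (Iic z)
    have h1 : μ (Iic x) ≤ μ (g ⁻¹' Iic z) := by
      rw [← hmap]
      exact (ENNReal.toReal_le_toReal (measure_ne_top μ _) (measure_ne_top ν _)).1 hz
    -- x ∉ J gives a point c ∈ s, c < x, z < g c
    have hc : ∃ c ∈ s, c < x ∧ z < g c := by
      by_contra hcon
      push_neg at hcon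
      exact hxJ ⟨hxs, z, hzx, fun c hcs hcx => hcon c hcs hcx⟩
    obtain ⟨c, hcs, hcx, hzgc⟩ := hc
    -- W ⊆ Iic c
    have hW : g ⁻¹' Iic z ∩ s ⊆ Iic c := by
      rintro w ⟨hw1, hw2⟩
      by_contra hwc
      have hcw : c < w := not_le.1 hwc
      have : g c ≤ g w := hmono hcs hw2 hcw.le
      have : g c ≤ z := this.trans hw1
      linarith
    have h2 : μ (Iic x) ≤ μ (Iic c) := by
      calc μ (Iic x) ≤ μ (g ⁻¹' Iic z) := h1
        _ = μ (g ⁻¹' Iic z ∩ s) := (measure_inter_conull hs).symm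
        _ ≤ μ (Iic c) := measure_mono hW
    -- deduce μ (Ioc c x) = 0
    have hsplit : μ (Iic c) + μ (Ioc c x) = μ (Iic x) := by
      rw [← measure_union (Set.Iic_disjoint_Ioc le_rfl) measurableSet_Ioc,
        Set.Iic_union_Ioc_eq_Iic hcx.le]
    have hflat : μ (Ioc c x) = 0 := by
      by_contra hne
      have : μ (Iic c) + μ (Ioc c x) > μ (Iic c) := by
        exact ENNReal.lt_add_right (measure_ne_top μ _) hne
      rw [hsplit] at this
      exact absurd h2 (not_le.2 this)
    exact hxf ⟨c, hcx, hflat⟩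
  linarith
lemma ofReal_sq_eq (t : ℝ) : ENNReal.ofReal (t ^ 2) = (‖t‖₊ : ℝ≥0∞) ^ (2:ℝ) := by
  have h2 : (‖t‖₊ : ℝ≥0∞) ^ (2:ℝ) = (‖t‖₊ : ℝ≥0∞) ^ (2:ℕ) := by
    rw [← ENNReal.rpow_natCast]; norm_num
  rw [h2, ← enorm_eq_nnnorm, Real.enorm_eq_ofReal_abs, ← ENNReal.ofReal_pow (abs_nonneg t), sq_abs]

lemma lintegral_sq_lt_top [IsProbabilityMeasure μ] (v : Lp ℝ 2 μ) :
    ∫⁻ x, ENNReal.ofReal (v x ^ 2) ∂μ < ⊤ := by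
  have hm := Lp.memLp v
  have h2 := hm.2
  rw [eLpNorm_eq_lintegral_rpow_enorm_toReal (by norm_num) (by norm_num)] at h2
  simp only [ENNReal.toReal_ofNat, enorm_eq_nnnorm] at h2
  have hlt : ∫⁻ a, (‖v a‖₊ : ℝ≥0∞) ^ (2:ℝ) ∂μ < ⊤ := by
    by_contra htop
    push_neg at htop
    rw [top_le_iff.1 htop] at h2
    rw [ENNReal.top_rpow_of_pos (by norm_num)] at h2
    exact lt_irrefl _ h2
  simpa only [ofReal_sq_eq] using hlt

lemma second_moment_map [IsProbabilityMeasure μ]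
    (hμ2 : ∫⁻ x, ENNReal.ofReal (x ^ 2) ∂μ < ⊤) (v : Lp ℝ 2 μ) :
    ∫⁻ x, ENNReal.ofReal (x ^ 2) ∂(μ.map (fun x => v x + x)) < ⊤ := by
  have hvm : Measurable (⇑v) := (Lp.stronglyMeasurable v).measurable
  have hg : Measurable (fun x : ℝ => v x + x) := hvm.add measurable_id
  rw [show (fun x : ℝ => ENNReal.ofReal (x ^ 2)) = fun x : ℝ => ENNReal.ofReal (id x ^ 2) from rfl,
    lintegral_map ((measurable_id.pow_const 2).ennreal_ofReal) hg]
  simp only [id_eq]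
  have hbound : ∀ x : ℝ, ENNReal.ofReal ((v x + x) ^ 2) ≤
      2 * ENNReal.ofReal (v x ^ 2) + 2 * ENNReal.ofReal (x ^ 2) := by
    intro x
    have h1 : (v x + x) ^ 2 ≤ 2 * (v x ^ 2) + 2 * (x ^ 2) := by nlinarith [sq_nonneg (v x - x)]
    calc ENNReal.ofReal ((v x + x) ^ 2) ≤ ENNReal.ofReal (2 * (v x ^ 2) + 2 * (x ^ 2)) :=
          ENNReal.ofReal_le_ofReal h1
      _ = ENNReal.ofReal (2 * (v x ^ 2)) + ENNReal.ofReal (2 * (x ^ 2)) :=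
          ENNReal.ofReal_add (by positivity) (by positivity)
      _ = 2 * ENNReal.ofReal (v x ^ 2) + 2 * ENNReal.ofReal (x ^ 2) := by
          rw [ENNReal.ofReal_mul (by norm_num), ENNReal.ofReal_mul (by norm_num)]
          norm_num
  calc ∫⁻ x, ENNReal.ofReal ((v x + x) ^ 2) ∂μ
      ≤ ∫⁻ x, (2 * ENNReal.ofReal (v x ^ 2) + 2 * ENNReal.ofReal (x ^ 2)) ∂μ :=
        lintegral_mono hbound
    _ = 2 * ∫⁻ x, ENNReal.ofReal (v x ^ 2) ∂μ + 2 * ∫⁻ x, ENNReal.ofReal (x ^ 2) ∂μ := by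
        rw [lintegral_add_left (((hvm.pow_const 2).ennreal_ofReal).const_mul 2),
          lintegral_const_mul' 2 _ (by norm_num), lintegral_const_mul' 2 _ (by norm_num)]
    _ < ⊤ := by
        have h1 := lintegral_sq_lt_top (μ := μ) v
        have h2 := ENNReal.mul_lt_top (by norm_num : (2:ℝ≥0∞) < ⊤) h1
        have h3 := ENNReal.mul_lt_top (by norm_num : (2:ℝ≥0∞) < ⊤) hμ2
        exact ENNReal.add_lt_top.2 ⟨h2, h3⟩

end Null

section Main
variable {μ : Measure ℝ}

def Smu (μ : Measure ℝ) : Set (Lp ℝ 2 μ) :=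
  {v | ∃ s : Set ℝ, μ sᶜ = 0 ∧ MonotoneOn (fun x => v x + x) s}

lemma Smu_convex : Convex ℝ (Smu μ) := by
  rintro v ⟨sv, hsv, hmv⟩ w ⟨sw, hsw, hmw⟩ a b ha hb hab
  have h1 := Lp.coeFn_add (a • v) (b • w)
  have h2 := Lp.coeFn_smul a v
  have h3 := Lp.coeFn_smul b w
  have key : ∀ᵐ x ∂μ, (⇑(a • v + b • w)) x = a * v x + b * w x := by
    filter_upwards [h1, h2, h3] with x e1 e2 e3
    rw [e1]
    simp only [Pi.add_apply, e2, e3, Pi.smul_apply, smul_eq_mul]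
  rw [ae_iff] at key
  refine ⟨sv ∩ sw ∩ {x | (⇑(a • v + b • w)) x = a * v x + b * w x}, ?_, ?_⟩
  · rw [compl_inter, compl_inter]
    refine measure_union_null (measure_union_null hsv hsw) ?_
    exact key
  · rintro x ⟨⟨hxv, hxw⟩, hxe⟩ y ⟨⟨hyv, hyw⟩, hye⟩ hxy
    have e1 : (⇑(a • v + b • w)) x = a * v x + b * w x := hxe
    have e2 : (⇑(a • v + b • w)) y = a * v y + b * w y := hye
    simp only [e1, e2]
    have m1 : v x + x ≤ v y + y := hmv hxv hyv hxy
    have m2 : w x + x ≤ w y + y := hmw hxw hyw hxy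
    nlinarith

set_option synthInstance.maxHeartbeats 1000000 in
lemma Smu_isClosed : IsClosed (Smu μ) := by
  haveI : Fact ((1:ℝ≥0∞) ≤ 2) := ⟨one_le_two⟩
  refine IsSeqClosed.isClosed ?_
  intro f v hf hfv
  have htm : TendstoInMeasure μ (fun n => ⇑(f n)) atTop ⇑v :=
    tendstoInMeasure_of_tendsto_Lp hfv
  obtain ⟨ns, hns, hae⟩ := htm.exists_seq_tendsto_ae
  choose sfun hsnull hsmono using hf
  rw [ae_iff] at hae
  set t := {x | Tendsto (fun i => (f (ns i)) x) atTop (𝓝 (v x))} ∩ ⋂ i : ℕ, sfun (ns i) with ht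
  refine ⟨t, ?_, ?_⟩
  · rw [ht, compl_inter, compl_iInter]
    refine measure_union_null (by exact hae) (measure_iUnion_null fun i => hsnull (ns i))
  · rintro x ⟨hxt, hxi⟩ y ⟨hyt, hyi⟩ hxy
    simp only [mem_iInter] at hxi hyi
    have hx' : Tendsto (fun i => (f (ns i)) x + x) atTop (𝓝 (v x + x)) :=
      hxt.add tendsto_const_nhds
    have hy' : Tendsto (fun i => (f (ns i)) y + y) atTop (𝓝 (v y + y)) :=
      hyt.add tendsto_const_nhds
    exact le_of_tendsto_of_tendsto' hx' hy' fun i => hsmono (ns i) (hxi i) (hyi i) hxy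


lemma Vmu_subset_Smu [IsProbabilityMeasure μ] (hμa : ∀ x : ℝ, μ {x} = 0) :
    Vmu μ ⊆ Smu μ := by
  rintro v ⟨ν, ⟨hνp, _⟩, hv⟩
  haveI := hνp
  exact dirA hμa (⇑v) hv null_cdf_zero (null_Ioi_zero hμa)

lemma Smu_subset_Vmu [IsProbabilityMeasure μ] (hμa : ∀ x : ℝ, μ {x} = 0)
    (hμ2 : FinSecondMoment μ) : Smu μ ⊆ Vmu μ := by
  rintro v ⟨s, hs, hmono⟩
  have hvm : Measurable (⇑v) := (Lp.stronglyMeasurable v).measurable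
  have hg : Measurable (fun x : ℝ => v x + x) := hvm.add measurable_id
  refine ⟨μ.map (fun x : ℝ => v x + x),
    ⟨Measure.isProbabilityMeasure_map hg.aemeasurable, second_moment_map hμ2 v⟩, ?_⟩
  have hcore := core_identity hμa hg hs hmono
  filter_upwards [hcore] with x hx
  simp only [logMap, hx]
  ring

end Main

/-- `V_μ = log_μ(W₂(ℝ))` is a closed convex subset of the Hilbert space `L²(μ)`. -/
theorem Vmu_isClosed_convex (μ : Measure ℝ) (hμp : IsProbabilityMeasure μ)
    (hμa : Atomless μ) (hμ2 : FinSecondMoment μ) :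
    IsClosed (Vmu μ) ∧ Convex ℝ (Vmu μ) := by
  haveI := hμp
  have heq : Vmu μ = Smu μ :=
    subset_antisymm (Vmu_subset_Smu hμa) (Smu_subset_Vmu hμa hμ2)
  rw [heq]
  exact ⟨Smu_isClosed, Smu_convex⟩
end Aux
end
end

section
/- Let T : (0,1) → ℝ be square-integrable with respect to Lebesgue measure and almost everywhere increasing, i.e. there is a Borel set B ⊆ (0,1) of full Lebesgue measure such that for all x, y ∈ B with x < y one has T(x) ≤ T(y). Then there exists a Borel probability measure ν on ℝ with finite second moment such that T = F_ν⁻ Lebesgue-almost everywhere on (0,1). -/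
open MeasureTheory

noncomputable section

open Set Filter

lemma cdf'_eq_cdf (ν : Measure ℝ) [IsProbabilityMeasure ν] (x : ℝ) :
    cdf' ν x = ProbabilityTheory.cdf ν x := (ProbabilityTheory.cdf_eq_real ν x).symm

lemma quantile_set_nonempty (ν : Measure ℝ) [IsProbabilityMeasure ν] {y : ℝ} (hy1 : y < 1) :
    {x : ℝ | y ≤ cdf' ν x}.Nonempty := by
  obtain ⟨x, hx⟩ :=
    ((ProbabilityTheory.tendsto_cdf_atTop ν).eventually (eventually_gt_nhds hy1)).exists
  exact ⟨x, by rw [Set.mem_setOf_eq, cdf'_eq_cdf]; exact hx.le⟩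

lemma quantile_set_bddBelow (ν : Measure ℝ) [IsProbabilityMeasure ν] {y : ℝ} (hy0 : 0 < y) :
    BddBelow {x : ℝ | y ≤ cdf' ν x} := by
  obtain ⟨x₀, hx₀⟩ :=
    ((ProbabilityTheory.tendsto_cdf_atBot ν).eventually (eventually_lt_nhds hy0)).exists
  refine ⟨x₀, fun z hz => ?_⟩
  by_contra h
  push_neg at h
  have hm : ProbabilityTheory.cdf ν z ≤ ProbabilityTheory.cdf ν x₀ :=
    ProbabilityTheory.monotone_cdf ν h.le
  rw [Set.mem_setOf_eq, cdf'_eq_cdf] at hz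
  linarith

lemma quantile_le_iff (ν : Measure ℝ) [IsProbabilityMeasure ν] {y : ℝ} (hy0 : 0 < y)
    (hy1 : y < 1) (x : ℝ) : quantile ν y ≤ x ↔ y ≤ cdf' ν x := by
  constructor
  · intro h
    have key : y ≤ cdf' ν (quantile ν y) := by
      by_contra hlt
      push_neg at hlt
      rw [cdf'_eq_cdf] at hlt
      have hrc := (ProbabilityTheory.cdf ν).right_continuous (quantile ν y)
      have hev : ∀ᶠ z in nhdsWithin (quantile ν y) (Set.Ici (quantile ν y)),
          ProbabilityTheory.cdf ν z < y := hrc.eventually (eventually_lt_nhds hlt)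
      obtain ⟨u, hu, hsub⟩ := mem_nhdsGE_iff_exists_Ico_subset.mp hev
      have hle : u ≤ quantile ν y := by
        refine le_csInf (quantile_set_nonempty ν hy1) (fun z hz => ?_)
        by_contra hzu
        push_neg at hzu
        have hq : quantile ν y ≤ z := csInf_le (quantile_set_bddBelow ν hy0) hz
        have : ProbabilityTheory.cdf ν z < y := hsub ⟨hq, hzu⟩
        rw [Set.mem_setOf_eq, cdf'_eq_cdf] at hz
        linarith
      exact absurd hle (not_le.mpr hu)
    rw [cdf'_eq_cdf] at key ⊢
    exact key.trans (ProbabilityTheory.monotone_cdf ν h)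
  · intro h
    exact csInf_le (quantile_set_bddBelow ν hy0) h

lemma quantile_monotoneOn (ν : Measure ℝ) [IsProbabilityMeasure ν] :
    MonotoneOn (quantile ν) (Set.Ioo (0 : ℝ) 1) := by
  intro a ha b hb hab
  exact csInf_le_csInf (quantile_set_bddBelow ν ha.1) (quantile_set_nonempty ν hb.2)
    (fun x hx => hab.trans hx)

/-- Every square-integrable, almost everywhere increasing function on `(0,1)` agrees
Lebesgue-almost everywhere with the quantile function of a Borel probability measure
on `ℝ` with finite second moment. -/
theorem ae_increasing_is_quantile (T : ℝ → ℝ)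
    (hT : MemLp T 2 (volume.restrict (Set.Ioo (0 : ℝ) 1)))
    (B : Set ℝ) (hBmeas : MeasurableSet B) (hBsub : B ⊆ Set.Ioo 0 1)
    (hBfull : volume (Set.Ioo (0 : ℝ) 1 \ B) = 0)
    (hmono : ∀ x ∈ B, ∀ y ∈ B, x < y → T x ≤ T y) :
    ∃ ν : Measure ℝ, IsProbabilityMeasure ν ∧ FinSecondMoment ν ∧
      T =ᵐ[volume.restrict (Set.Ioo (0 : ℝ) 1)] quantile ν := by
  set μ := volume.restrict (Set.Ioo (0 : ℝ) 1) with hμdef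
  have hprob : IsProbabilityMeasure μ := by
    constructor
    rw [hμdef, Measure.restrict_apply_univ, Real.volume_Ioo]
    norm_num
  obtain ⟨T', hT'meas, hTT'⟩ : ∃ T' : ℝ → ℝ, Measurable T' ∧ T =ᵐ[μ] T' :=
    ⟨hT.1.mk T, hT.1.stronglyMeasurable_mk.measurable, hT.1.ae_eq_mk⟩
  have hT'ae : AEMeasurable T' μ := hT'meas.aemeasurable
  set ν := μ.map T' with hνdef
  have hνprob : IsProbabilityMeasure ν := Measure.isProbabilityMeasure_map hT'ae
  have hT'2 : MemLp T' 2 μ := hT.ae_eq hTT'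
  refine ⟨ν, hνprob, ?_, ?_⟩
  · -- finite second moment
    rw [FinSecondMoment, hνdef,
      lintegral_map (f := fun x : ℝ => ENNReal.ofReal (x ^ 2)) (by fun_prop) hT'meas]
    have hfi := hT'2.integrable_sq.hasFiniteIntegral
    refine lt_of_le_of_lt (lintegral_mono fun x => ?_) hfi
    rw [Real.enorm_eq_ofReal_abs]
    exact ENNReal.ofReal_le_ofReal (le_abs_self _)
  · -- T =ᵐ quantile ν
    -- Step 1 : a.e. quantile ν ≤ T'
    set C := B ∩ {x | T x = T' x} ∩ Set.Ioo (0 : ℝ) 1 with hCdef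
    have hCc : μ Cᶜ = 0 := by
      have h1 : μ Bᶜ = 0 := by
        rw [hμdef, Measure.restrict_apply' measurableSet_Ioo]
        have hsub' : Bᶜ ∩ Set.Ioo (0:ℝ) 1 ⊆ Set.Ioo (0:ℝ) 1 \ B := fun x hx => ⟨hx.2, hx.1⟩
        exact measure_mono_null hsub' hBfull
      have h2 : μ {x | T x = T' x}ᶜ = 0 := hTT'
      have h3 : μ (Set.Ioo (0 : ℝ) 1)ᶜ = 0 := by
        rw [hμdef, Measure.restrict_apply' measurableSet_Ioo]
        simp
      rw [hCdef]
      refine measure_mono_null ?_ (measure_union_null (measure_union_null h1 h2) h3)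
      intro x hx
      simp only [Set.mem_compl_iff, Set.mem_inter_iff, not_and_or] at hx
      rcases hx with (h | h) | h
      · exact Or.inl (Or.inl h)
      · exact Or.inl (Or.inr h)
      · exact Or.inr h
    have hCmem : ∀ᵐ y ∂μ, y ∈ C := by
      rw [MeasureTheory.ae_iff]
      exact hCc
    have hkey : ∀ y ∈ C, quantile ν y ≤ T' y := by
      intro y hy
      obtain ⟨⟨hyB, hyT⟩, hyIoo⟩ := hy
      have hsub : C ∩ Set.Iic y ⊆ T' ⁻¹' Set.Iic (T' y) := by
        intro z hz
        obtain ⟨⟨⟨hzB, hzT⟩, _⟩, hzy⟩ := hz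
        rcases lt_or_eq_of_le (Set.mem_Iic.mp hzy) with h | h
        · have := hmono z hzB y hyB h
          simp only [Set.mem_preimage, Set.mem_Iic]
          rw [← hzT, ← hyT]
          exact this
        · simp [Set.mem_preimage, h]
      have hν_ge : ENNReal.ofReal y ≤ ν (Set.Iic (T' y)) := by
        rw [hνdef, Measure.map_apply hT'meas measurableSet_Iic]
        calc ENNReal.ofReal y = μ (Set.Iic y) := by
              rw [hμdef, Measure.restrict_apply' measurableSet_Ioo]
              have : Set.Iic y ∩ Set.Ioo (0 : ℝ) 1 = Set.Ioc 0 y := by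
                ext z
                simp only [Set.mem_inter_iff, Set.mem_Iic, Set.mem_Ioo, Set.mem_Ioc]
                constructor
                · rintro ⟨h1, h2, _⟩; exact ⟨h2, h1⟩
                · rintro ⟨h1, h2⟩; exact ⟨h2, h1, lt_of_le_of_lt h2 hyIoo.2⟩
              rw [this, Real.volume_Ioc, sub_zero]
          _ ≤ μ (C ∩ Set.Iic y) := by
              have hle : μ (Set.Iic y) ≤ μ (C ∩ Set.Iic y) + μ Cᶜ := by
                refine le_trans (measure_mono ?_) (measure_union_le _ _)
                intro z hz
                by_cases hzC : z ∈ C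
                · exact Or.inl ⟨hzC, hz⟩
                · exact Or.inr hzC
              rwa [hCc, add_zero] at hle
          _ ≤ μ (T' ⁻¹' Set.Iic (T' y)) := measure_mono hsub
      have hy_cdf : y ≤ cdf' ν (T' y) := by
        rw [cdf']
        exact (ENNReal.ofReal_le_iff_le_toReal (measure_ne_top ν _)).mp hν_ge
      exact (quantile_le_iff ν hyIoo.1 hyIoo.2 (T' y)).mpr hy_cdf
    have hge : ∀ᵐ y ∂μ, quantile ν y ≤ T' y := hCmem.mono fun y hy => hkey y hy
    -- Step 2 : pushforward of μ by quantile ν is ν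
    have hGae : AEMeasurable (quantile ν) μ :=
      aemeasurable_restrict_of_monotoneOn measurableSet_Ioo (quantile_monotoneOn ν)
    have hmap : μ.map (quantile ν) = ν := by
      have hprobmap : IsProbabilityMeasure (μ.map (quantile ν)) := Measure.isProbabilityMeasure_map hGae
      refine Measure.ext_of_Iic _ _ (fun x => ?_)
      rw [Measure.map_apply_of_aemeasurable hGae measurableSet_Iic, hμdef,
        Measure.restrict_apply' measurableSet_Ioo]
      have hset : quantile ν ⁻¹' Set.Iic x ∩ Set.Ioo 0 1
          = Set.Iic (cdf' ν x) ∩ Set.Ioo 0 1 := by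
        ext z
        simp only [Set.mem_inter_iff, Set.mem_preimage, Set.mem_Iic, Set.mem_Ioo]
        constructor
        · rintro ⟨h1, h2⟩
          exact ⟨(quantile_le_iff ν h2.1 h2.2 x).mp h1, h2⟩
        · rintro ⟨h1, h2⟩
          exact ⟨(quantile_le_iff ν h2.1 h2.2 x).mpr h1, h2⟩
      rw [hset]
      have h0 : 0 ≤ cdf' ν x := ENNReal.toReal_nonneg
      have h1 : cdf' ν x ≤ 1 := by
        rw [cdf'_eq_cdf]; exact ProbabilityTheory.cdf_le_one ν x
      have hν_Iic : ν (Set.Iic x) = ENNReal.ofReal (cdf' ν x) := by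
        rw [cdf'_eq_cdf, ProbabilityTheory.ofReal_cdf]
      rw [hν_Iic]
      rcases lt_or_ge (cdf' ν x) 1 with hc | hc
      · have : Set.Iic (cdf' ν x) ∩ Set.Ioo 0 1 = Set.Ioc 0 (cdf' ν x) := by
          ext z
          simp only [Set.mem_inter_iff, Set.mem_Iic, Set.mem_Ioo, Set.mem_Ioc]
          constructor
          · rintro ⟨ha, hb, _⟩; exact ⟨hb, ha⟩
          · rintro ⟨ha, hb⟩; exact ⟨hb, ha, lt_of_le_of_lt hb hc⟩
        rw [this, Real.volume_Ioc, sub_zero]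
      · have hc1 : cdf' ν x = 1 := le_antisymm h1 hc
        have : Set.Iic (cdf' ν x) ∩ Set.Ioo 0 1 = Set.Ioo (0 : ℝ) 1 := by
          rw [hc1]
          ext z
          simp only [Set.mem_inter_iff, Set.mem_Iic, Set.mem_Ioo]
          exact ⟨fun h => h.2, fun h => ⟨h.2.le, h⟩⟩
        rw [this, Real.volume_Ioo, hc1]
        norm_num
    -- Step 3 : equality of integrals
    have hT'int : Integrable T' μ := hT'2.integrable one_le_two
    have hidν : Integrable (fun x : ℝ => x) ν := by
      rw [hνdef]
      exact (integrable_map_measure (measurable_id'.aestronglyMeasurable) hT'ae).mpr hT'int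
    have hGint : Integrable (quantile ν) μ :=
      (integrable_map_measure (measurable_id'.aestronglyMeasurable) hGae).mp (by rwa [hmap])
    have hint1 : ∫ x, x ∂ν = ∫ y, T' y ∂μ := by
      rw [hνdef, integral_map hT'ae (measurable_id'.aestronglyMeasurable)]
    have hint2 : ∫ x, x ∂ν = ∫ y, quantile ν y ∂μ := by
      conv_lhs => rw [← hmap]
      rw [integral_map hGae (measurable_id'.aestronglyMeasurable)]
    have hzero : ∫ y, (T' y - quantile ν y) ∂μ = 0 := by
      rw [integral_sub hT'int hGint, ← hint1, ← hint2, sub_self]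
    have hnonneg : 0 ≤ᵐ[μ] fun y => T' y - quantile ν y :=
      hge.mono fun y h => sub_nonneg.mpr h
    have heq0 := (integral_eq_zero_iff_of_nonneg_ae hnonneg (hT'int.sub hGint)).mp hzero
    filter_upwards [hTT', heq0] with y h1 h2
    have : T' y - quantile ν y = 0 := h2
    linarith [this, h1]
end
end

section
/- Let μ be an atomless probability measure on ℝ with finite second moment, let γ : [0,1] → W₂(ℝ) be a curve, and set v₀ = log_μ(γ(0)), v₁ = log_μ(γ(1)). Then γ is a constant-speed geodesic, i.e. d_W(γ(s), γ(t)) = |s − t|·d_W(γ(0), γ(1)) for all s, t ∈ [0,1], if and only if γ(t) = exp_μ((1−t)v₀ + t v₁) for all t ∈ [0,1]. -/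
open MeasureTheory

noncomputable section

namespace WAux

open Set Filter Topology ProbabilityTheory
open scoped ENNReal

noncomputable def unif : Measure ℝ := volume.restrict (Set.Ioo 0 1)

lemma unif_univ : unif Set.univ = 1 := by
  simp [unif, Real.volume_Ioo]

instance : IsProbabilityMeasure unif := ⟨unif_univ⟩

lemma cdf'_eq (ν : Measure ℝ) [IsProbabilityMeasure ν] : cdf' ν = ⇑(cdf ν) := by
  funext x; rw [ProbabilityTheory.cdf_eq_real]; rfl

lemma cdf'_mono [IsProbabilityMeasure ν] : Monotone (cdf' ν) := by
  rw [cdf'_eq]; exact monotone_cdf ν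

lemma cdf'_nonneg [IsProbabilityMeasure ν] (x : ℝ) : 0 ≤ cdf' ν x := by
  rw [cdf'_eq]; exact cdf_nonneg ν x

lemma cdf'_le_one [IsProbabilityMeasure ν] (x : ℝ) : cdf' ν x ≤ 1 := by
  rw [cdf'_eq]; exact cdf_le_one ν x

lemma ofReal_cdf' [IsProbabilityMeasure ν] (x : ℝ) :
    ENNReal.ofReal (cdf' ν x) = ν (Set.Iic x) := by
  rw [cdf'_eq]; exact ProbabilityTheory.ofReal_cdf ν x

lemma tendsto_cdf'_atBot [IsProbabilityMeasure ν] : Tendsto (cdf' ν) atBot (𝓝 0) := by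
  rw [cdf'_eq]; exact tendsto_cdf_atBot ν

lemma tendsto_cdf'_atTop [IsProbabilityMeasure ν] : Tendsto (cdf' ν) atTop (𝓝 1) := by
  rw [cdf'_eq]; exact tendsto_cdf_atTop ν

lemma measurable_cdf' [IsProbabilityMeasure ν] : Measurable (cdf' ν) :=
  cdf'_mono.measurable

lemma tendsto_cdf'_right [IsProbabilityMeasure ν] (x : ℝ) :
    Tendsto (cdf' ν) (𝓝[>] x) (𝓝 (cdf' ν x)) := by
  rw [cdf'_eq]
  exact ((cdf ν).right_continuous x).tendsto.mono_left (nhdsWithin_mono x Ioi_subset_Ici_self)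

lemma quantile_set_nonempty [IsProbabilityMeasure ν] {y : ℝ} (hy : y < 1) :
    {x : ℝ | y ≤ cdf' ν x}.Nonempty := by
  obtain ⟨x, hx⟩ := (tendsto_cdf'_atTop (ν := ν).eventually (eventually_gt_nhds hy)).exists
  exact ⟨x, hx.le⟩

lemma quantile_set_bddBelow [IsProbabilityMeasure ν] {y : ℝ} (hy : 0 < y) :
    BddBelow {x : ℝ | y ≤ cdf' ν x} := by
  obtain ⟨x₀, hx₀⟩ := (tendsto_cdf'_atBot (ν := ν).eventually (eventually_lt_nhds hy)).exists
  refine ⟨x₀, fun x hx => ?_⟩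
  by_contra h
  push_neg at h
  exact absurd hx (not_le.2 ((cdf'_mono h.le).trans_lt hx₀))

lemma le_cdf'_quantile [IsProbabilityMeasure ν] {y : ℝ} (hy0 : 0 < y) (hy1 : y < 1) :
    y ≤ cdf' ν (quantile ν y) := by
  refine ge_of_tendsto (tendsto_cdf'_right _) (eventually_nhdsWithin_of_forall fun x hx => ?_)
  obtain ⟨x', hx', hlt⟩ := exists_lt_of_csInf_lt (quantile_set_nonempty hy1) hx
  exact hx'.trans (cdf'_mono hlt.le)

lemma quantile_le_iff [IsProbabilityMeasure ν] {y x : ℝ} (hy0 : 0 < y) (hy1 : y < 1) :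
    quantile ν y ≤ x ↔ y ≤ cdf' ν x := by
  constructor
  · intro h
    exact (le_cdf'_quantile hy0 hy1).trans (cdf'_mono h)
  · intro h
    exact csInf_le (quantile_set_bddBelow hy0) h

lemma monotoneOn_quantile [IsProbabilityMeasure ν] : MonotoneOn (quantile ν) (Ioo 0 1) := by
  intro a ha b hb hab
  exact csInf_le_csInf (quantile_set_bddBelow ha.1) (quantile_set_nonempty hb.2)
    (fun x hx => hab.trans hx)

/-- measurable version of the quantile function -/
noncomputable def qIoo (ν : Measure ℝ) (y : ℝ) : ℝ :=
  if y ∈ Ioo (0:ℝ) 1 then quantile ν y else 0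

lemma qIoo_eqOn (ν : Measure ℝ) : EqOn (qIoo ν) (quantile ν) (Ioo 0 1) :=
  fun y hy => if_pos hy

lemma unif_apply (s : Set ℝ) (hs : MeasurableSet s) : unif s = volume (s ∩ Ioo 0 1) := by
  rw [unif, Measure.restrict_apply hs]

lemma compl_Ioo_null : unif (Ioo (0:ℝ) 1)ᶜ = 0 := by
  rw [unif, Measure.restrict_apply (measurableSet_Ioo.compl)]
  simp

lemma ae_mem_Ioo : ∀ᵐ y ∂unif, y ∈ Ioo (0:ℝ) 1 := by
  rw [ae_iff]
  exact measure_mono_null (fun y hy => by simpa using hy) compl_Ioo_null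

lemma qIoo_ae_eq (ν : Measure ℝ) : qIoo ν =ᵐ[unif] quantile ν :=
  ae_mem_Ioo.mono fun y hy => qIoo_eqOn ν hy

lemma qIoo_preimage_Iic [IsProbabilityMeasure ν] (x : ℝ) :
    qIoo ν ⁻¹' Iic x =
      (Ioo 0 1 ∩ Iic (cdf' ν x)) ∪ ((Ioo (0:ℝ) 1)ᶜ ∩ {y | (0:ℝ) ≤ x}) := by
  ext y
  by_cases hy : y ∈ Ioo (0:ℝ) 1
  · simp only [mem_preimage, mem_Iic, qIoo, if_pos hy, mem_union, mem_inter_iff, hy, true_and,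
      mem_compl_iff, not_true, false_and, or_false]
    exact (quantile_le_iff hy.1 hy.2).trans Iff.rfl
  · have h0 : qIoo ν y = 0 := if_neg hy
    simp only [mem_preimage, mem_Iic, h0, mem_union, mem_inter_iff, hy, false_and,
      mem_compl_iff, not_false_iff, true_and, false_or, mem_setOf_eq]

lemma measurable_qIoo [IsProbabilityMeasure ν] : Measurable (qIoo ν) := by
  apply measurable_of_Iic
  intro x
  rw [qIoo_preimage_Iic]
  by_cases h : (0:ℝ) ≤ x
  · have : {y : ℝ | (0:ℝ) ≤ x} = univ := eq_univ_of_forall fun _ => h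
    rw [this]
    exact (measurableSet_Ioo.inter measurableSet_Iic).union
      (measurableSet_Ioo.compl.inter MeasurableSet.univ)
  · have : {y : ℝ | (0:ℝ) ≤ x} = ∅ := eq_empty_of_forall_notMem fun _ => h
    rw [this]
    simpa using (measurableSet_Ioo.inter measurableSet_Iic).union MeasurableSet.empty

lemma monotoneOn_qIoo [IsProbabilityMeasure ν] : MonotoneOn (qIoo ν) (Ioo 0 1) := by
  intro a ha b hb hab
  rw [qIoo_eqOn ν ha, qIoo_eqOn ν hb]
  exact monotoneOn_quantile ha hb hab

/-- Lemma A : inverse transform sampling -/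
lemma map_qIoo [IsProbabilityMeasure ν] : Measure.map (qIoo ν) unif = ν := by
  have hprob : IsProbabilityMeasure (Measure.map (qIoo ν) unif) :=
    Measure.isProbabilityMeasure_map measurable_qIoo.aemeasurable
  refine Measure.ext_of_Iic _ _ (fun x => ?_)
  rw [Measure.map_apply measurable_qIoo measurableSet_Iic, qIoo_preimage_Iic]
  have h1 : unif ((Ioo (0:ℝ) 1)ᶜ ∩ {y | (0:ℝ) ≤ x}) = 0 :=
    measure_mono_null inter_subset_left compl_Ioo_null
  have h2 : unif ((Ioo 0 1 ∩ Iic (cdf' ν x)) ∪ ((Ioo (0:ℝ) 1)ᶜ ∩ {y | (0:ℝ) ≤ x}))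
      = unif (Ioo 0 1 ∩ Iic (cdf' ν x)) := by
    refine le_antisymm ((measure_union_le _ _).trans ?_) (measure_mono subset_union_left)
    rw [h1, add_zero]
  rw [h2, unif_apply _ (measurableSet_Ioo.inter measurableSet_Iic),
    inter_assoc, inter_comm (Iic (cdf' ν x)), ← inter_assoc, inter_self]
  have hc0 : 0 ≤ cdf' ν x := cdf'_nonneg x
  have hc1 : cdf' ν x ≤ 1 := cdf'_le_one x
  have hvol : volume (Ioo 0 1 ∩ Iic (cdf' ν x)) = ENNReal.ofReal (cdf' ν x) := by
    refine le_antisymm ?_ ?_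
    · calc volume (Ioo 0 1 ∩ Iic (cdf' ν x)) ≤ volume (Ioc 0 (cdf' ν x)) := by
            refine measure_mono fun z hz => ⟨hz.1.1, hz.2⟩
      _ = ENNReal.ofReal (cdf' ν x) := by rw [Real.volume_Ioc, sub_zero]
    · calc ENNReal.ofReal (cdf' ν x) = volume (Ioo 0 (cdf' ν x)) := by
            rw [Real.volume_Ioo, sub_zero]
      _ ≤ volume (Ioo 0 1 ∩ Iic (cdf' ν x)) := by
            refine measure_mono fun z hz => ⟨⟨hz.1, lt_of_lt_of_le hz.2 hc1⟩, hz.2.le⟩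
  rw [hvol, ofReal_cdf']

lemma Iio_eq_iUnion_Iic (a : ℝ) : Iio a = ⋃ n : ℕ, Iic (a - 1/(n+1)) := by
  ext x
  simp only [mem_Iio, mem_iUnion, mem_Iic]
  constructor
  · intro hx
    obtain ⟨n, hn⟩ := exists_nat_one_div_lt (sub_pos.2 hx)
    exact ⟨n, by push_cast at hn ⊢; linarith⟩
  · rintro ⟨n, hn⟩
    have : (0:ℝ) < 1/(n+1) := by positivity
    linarith

lemma Ioi_eq_iUnion_Ici (a : ℝ) : Ioi a = ⋃ n : ℕ, Ici (a + 1/(n+1)) := by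
  ext x
  simp only [mem_Ioi, mem_iUnion, mem_Ici]
  constructor
  · intro hx
    obtain ⟨n, hn⟩ := exists_nat_one_div_lt (sub_pos.2 hx)
    exact ⟨n, by push_cast at hn ⊢; linarith⟩
  · rintro ⟨n, hn⟩
    have : (0:ℝ) < 1/(n+1) := by positivity
    linarith

lemma cdf'_zero_null [IsProbabilityMeasure μ] : μ {x | cdf' μ x = 0} = 0 := by
  set T := {x | cdf' μ x = 0} with hT
  have hdown : ∀ ⦃x⦄, x ∈ T → ∀ ⦃z⦄, z ≤ x → z ∈ T := fun x hx z hz =>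
    le_antisymm (hx ▸ cdf'_mono hz) (cdf'_nonneg z)
  have hIic : ∀ x ∈ T, μ (Iic x) = 0 := fun x hx => by
    rw [← ofReal_cdf' x, hx]; simp
  rcases Set.eq_empty_or_nonempty T with h | h
  · simp [h]
  by_cases hbdd : BddAbove T
  · set b := sSup T with hbdef
    by_cases hb : b ∈ T
    · exact measure_mono_null (fun x hx => le_csSup hbdd hx) (hIic b hb)
    · have hsub : T ⊆ Iio b := fun x hx =>
        lt_of_le_of_ne (le_csSup hbdd hx) (fun he => hb (by rw [hbdef, ← he]; exact hx))
      refine measure_mono_null hsub ?_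
      rw [Iio_eq_iUnion_Iic]
      refine measure_iUnion_null fun n => ?_
      have hmem : b - 1/(n+1) ∈ T := by
        have hlt : b - 1/(n+1) < b := by
          have : (0:ℝ) < 1/(n+1) := by positivity
          linarith
        obtain ⟨x, hx, hgt⟩ := exists_lt_of_lt_csSup h hlt
        exact hdown hx hgt.le
      exact hIic _ hmem
  · exfalso
    obtain ⟨x, hx⟩ := ((tendsto_cdf'_atTop (ν := μ)).eventually
      (eventually_gt_nhds (by norm_num : (0:ℝ) < 1))).exists
    have : x ∈ T := by
      obtain ⟨x', hx', hge⟩ := not_bddAbove_iff.1 hbdd x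
      exact hdown hx' hge.le
    rw [hT] at this
    simp only [mem_setOf_eq] at this
    linarith

lemma cdf'_one_null [IsProbabilityMeasure μ] (hμa : Atomless μ) :
    μ {x | cdf' μ x = 1} = 0 := by
  set T := {x | cdf' μ x = 1} with hT
  have hup : ∀ ⦃x⦄, x ∈ T → ∀ ⦃z⦄, x ≤ z → z ∈ T := fun x hx z hz =>
    le_antisymm (cdf'_le_one z) (hx ▸ cdf'_mono hz)
  have hIoi : ∀ x ∈ T, μ (Ioi x) = 0 := by
    intro x hx
    have h1 : μ (Iic x) = 1 := by rw [← ofReal_cdf' x, hx]; simp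
    have hcompl := measure_compl (μ := μ) (measurableSet_Iic (a := x)) (measure_ne_top _ _)
    rw [compl_Iic] at hcompl
    simp [hcompl, h1]
  rcases Set.eq_empty_or_nonempty T with h | h
  · simp [h]
  by_cases hbdd : BddBelow T
  · set a := sInf T
    have hsub : T ⊆ {a} ∪ Ioi a := fun x hx => by
      rcases eq_or_lt_of_le (csInf_le hbdd hx) with he | hlt
      · exact Or.inl (by simp only [mem_singleton_iff]; exact he.symm)
      · exact Or.inr hlt
    refine measure_mono_null hsub (measure_union_null (by simpa using hμa a) ?_)
    rw [Ioi_eq_iUnion_Ici]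
    refine measure_iUnion_null fun n => ?_
    have : a < a + 1/(n+1) := by
      have : (0:ℝ) < 1/(n+1) := by positivity
      linarith
    obtain ⟨x, hx, hlt⟩ := exists_lt_of_csInf_lt h this
    exact measure_mono_null (fun z hz => lt_of_lt_of_le hlt hz) (hIoi x hx)
  · exfalso
    obtain ⟨x, hx⟩ := ((tendsto_cdf'_atBot (ν := μ)).eventually
      (eventually_lt_nhds (by norm_num : (0:ℝ) < 1))).exists
    have : x ∈ T := by
      obtain ⟨x', hx', hge⟩ := not_bddBelow_iff.1 hbdd x
      exact hup hx' hge.le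
    rw [hT] at this
    simp only [mem_setOf_eq] at this
    linarith

/-- Lemma B : the cdf pushes an atomless probability measure to `unif`. -/
lemma map_cdf' [IsProbabilityMeasure μ] (hμa : Atomless μ) :
    Measure.map (cdf' μ) μ = unif := by
  have : IsProbabilityMeasure (Measure.map (cdf' μ) μ) :=
    Measure.isProbabilityMeasure_map measurable_cdf'.aemeasurable
  refine Measure.ext_of_Iic _ _ (fun y => ?_)
  rw [Measure.map_apply measurable_cdf' measurableSet_Iic,
    unif_apply _ measurableSet_Iic]
  rcases le_or_gt y 0 with hy0 | hy0
  · have h1 : Iic y ∩ Ioo 0 1 = ∅ := by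
      ext x; simp only [mem_inter_iff, mem_Iic, mem_Ioo, mem_empty_iff_false, iff_false]
      rintro ⟨h1, h2, _⟩; linarith
    rw [h1, measure_empty]
    refine measure_mono_null (fun x hx => ?_) (cdf'_zero_null (μ := μ))
    simp only [mem_preimage, mem_Iic] at hx
    exact le_antisymm (hx.trans hy0) (cdf'_nonneg x)
  rcases le_or_gt 1 y with hy1 | hy1
  · have h1 : Iic y ∩ Ioo 0 1 = Ioo 0 1 := by
      refine inter_eq_self_of_subset_right (fun x hx => le_trans hx.2.le hy1)
    have h2 : cdf' μ ⁻¹' Iic y = univ :=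
      eq_univ_of_forall fun x => (cdf'_le_one x).trans hy1
    rw [h1, h2]
    simp [Real.volume_Ioo]
  · -- main case 0 < y < 1
    set T := cdf' μ ⁻¹' Iic y with hTdef
    have hdown : ∀ ⦃x⦄, x ∈ T → ∀ ⦃z⦄, z ≤ x → z ∈ T := fun x hx z hz =>
      le_trans (cdf'_mono hz) hx
    have hne : T.Nonempty := by
      obtain ⟨x, hx⟩ := ((tendsto_cdf'_atBot (ν := μ)).eventually
        (eventually_lt_nhds hy0)).exists
      exact ⟨x, hx.le⟩
    have hbdd : BddAbove T := by
      obtain ⟨x₁, hx₁⟩ := ((tendsto_cdf'_atTop (ν := μ)).eventually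
        (eventually_gt_nhds hy1)).exists
      refine ⟨x₁, fun x hx => ?_⟩
      by_contra hc
      push_neg at hc
      exact absurd hx (not_le.2 (lt_of_lt_of_le hx₁ (cdf'_mono hc.le)))
    set a := sSup T with ha
    have hIio : Iio a ⊆ T := fun x hx => by
      obtain ⟨x', hx', hgt⟩ := exists_lt_of_lt_csSup hne hx
      exact hdown hx' hgt.le
    have hIicIio : μ (Iic a) = μ (Iio a) := by
      refine le_antisymm ?_ (measure_mono Iio_subset_Iic_self)
      calc μ (Iic a) ≤ μ (Iio a ∪ {a}) := measure_mono (by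
              intro z hz
              rcases lt_or_eq_of_le (mem_Iic.1 hz) with h | h
              · exact Or.inl h
              · exact Or.inr (by simp [h]))
        _ ≤ μ (Iio a) + μ {a} := measure_union_le _ _
        _ = μ (Iio a) := by rw [hμa a, add_zero]
    have hFa_le : cdf' μ a ≤ y := by
      have hle : μ (Iio a) ≤ ENNReal.ofReal y := by
        rw [Iio_eq_iUnion_Iic]
        have hd : Directed (· ⊆ ·) (fun n : ℕ => Iic (a - 1/(n+1))) := by
          refine directed_of_isDirected_le fun m n hmn => Iic_subset_Iic.2 ?_
          have : (1:ℝ)/(n+1) ≤ 1/(m+1) :=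
            one_div_le_one_div_of_le (by positivity) (by have := (Nat.cast_le (α:=ℝ)).2 hmn; linarith)
          linarith
        rw [hd.measure_iUnion]
        refine iSup_le fun n => ?_
        have hmem : a - 1/(n+1) ∈ T := hIio (by
          have : (0:ℝ) < 1/(n+1) := by positivity
          simp only [mem_Iio]; linarith)
        rw [← ofReal_cdf']
        exact ENNReal.ofReal_le_ofReal hmem
      have := hIicIio ▸ hle
      rw [← ofReal_cdf' a] at this
      exact (ENNReal.ofReal_le_ofReal_iff hy0.le).1 this
    have haT : a ∈ T := hFa_le
    have hFa_ge : y ≤ cdf' μ a := by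
      by_contra hc
      push_neg at hc
      obtain ⟨x, hx, hxa⟩ := (((tendsto_cdf'_right (ν := μ) a).eventually
        (eventually_lt_nhds hc)).and self_mem_nhdsWithin).exists
      exact absurd (le_csSup hbdd (hx.le : x ∈ T)) (not_le.2 hxa)
    have hTIic : T = Iic a := by
      ext x
      exact ⟨fun hx => le_csSup hbdd hx, fun hx => hdown haT hx⟩
    have h2 : Iic y ∩ Ioo 0 1 = Ioc 0 y := by
      ext x
      simp only [mem_inter_iff, mem_Iic, mem_Ioo, mem_Ioc]
      constructor
      · rintro ⟨h1, h2, _⟩; exact ⟨h2, h1⟩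
      · rintro ⟨h1, h2⟩; exact ⟨h2, h1, lt_of_le_of_lt h2 hy1⟩
    rw [hTIic, h2, ← ofReal_cdf' a, le_antisymm hFa_le hFa_ge, Real.volume_Ioc, sub_zero]

/-- transport cost -/
noncomputable def Wcost (π : Measure (ℝ × ℝ)) : ℝ≥0∞ :=
  ∫⁻ p, ENNReal.ofReal ((p.1 - p.2) ^ 2) ∂π

def Eset (q : ℝ × ℝ) : Set (ℝ × ℝ) :=
  {p | p.1 ⊓ p.2 ≤ q.1 ⊓ q.2 ∧ q.1 ⊔ q.2 < p.1 ⊔ p.2}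

lemma Eset_eq_union (q : ℝ × ℝ) :
    Eset q = (Iic (q.1 ⊓ q.2) ×ˢ Ioi (q.1 ⊔ q.2)) ∪ (Ioi (q.1 ⊔ q.2) ×ˢ Iic (q.1 ⊓ q.2)) := by
  ext p
  simp only [Eset, mem_setOf_eq, mem_union, mem_prod, mem_Iic, mem_Ioi]
  constructor
  · rintro ⟨h1, h2⟩
    rcases le_total p.1 p.2 with h | h
    · left
      rw [inf_eq_left.2 h] at h1
      rw [sup_eq_right.2 h] at h2
      exact ⟨h1, h2⟩
    · right
      rw [inf_eq_right.2 h] at h1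
      rw [sup_eq_left.2 h] at h2
      exact ⟨h2, h1⟩
  · have hab : q.1 ⊓ q.2 ≤ q.1 ⊔ q.2 := le_trans inf_le_left le_sup_left
    rintro (⟨h1, h2⟩ | ⟨h1, h2⟩)
    · exact ⟨le_trans inf_le_left h1, lt_of_lt_of_le h2 le_sup_right⟩
    · exact ⟨le_trans inf_le_right h2, lt_of_lt_of_le h1 le_sup_left⟩

lemma measurableSet_Eset (q : ℝ × ℝ) : MeasurableSet (Eset q) := by
  rw [Eset_eq_union]
  exact ((measurableSet_Iic.prod measurableSet_Ioi).union
    (measurableSet_Ioi.prod measurableSet_Iic))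

lemma Eset_section (p : ℝ × ℝ) :
    {q : ℝ × ℝ | p ∈ Eset q} =
      Ico (p.1 ⊓ p.2) (p.1 ⊔ p.2) ×ˢ Ico (p.1 ⊓ p.2) (p.1 ⊔ p.2) := by
  ext q
  simp only [Eset, mem_setOf_eq, mem_prod, mem_Ico]
  constructor
  · rintro ⟨h1, h2⟩
    exact ⟨⟨le_trans h1 inf_le_left, lt_of_le_of_lt le_sup_left h2⟩,
      ⟨le_trans h1 inf_le_right, lt_of_le_of_lt le_sup_right h2⟩⟩
  · rintro ⟨⟨ha1, hb1⟩, ⟨ha2, hb2⟩⟩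
    exact ⟨le_inf ha1 ha2, sup_lt_iff.2 ⟨hb1, hb2⟩⟩

lemma volume_prod_section (p : ℝ × ℝ) :
    (volume.prod volume) {q : ℝ × ℝ | p ∈ Eset q} = ENNReal.ofReal ((p.1 - p.2) ^ 2) := by
  rw [Eset_section, Measure.prod_prod, Real.volume_Ico]
  have h : p.1 ⊔ p.2 - p.1 ⊓ p.2 = |p.1 - p.2| := by
    rw [max_sub_min_eq_abs, abs_sub_comm]
  rw [h, ← ENNReal.ofReal_mul (abs_nonneg _), abs_mul_abs_self, sq]

/-- Tonelli representation of the cost. -/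
lemma Wcost_eq_lintegral (π : Measure (ℝ × ℝ)) [IsProbabilityMeasure π] :
    Wcost π = ∫⁻ q, π (Eset q) ∂(volume.prod volume) := by
  classical
  set S : Set ((ℝ × ℝ) × (ℝ × ℝ)) := {r | r.1 ∈ Eset r.2} with hSdef
  have hS : MeasurableSet S := by
    have h1 : S = {r : (ℝ × ℝ) × (ℝ × ℝ) |
        r.1.1 ⊓ r.1.2 ≤ r.2.1 ⊓ r.2.2} ∩ {r | r.2.1 ⊔ r.2.2 < r.1.1 ⊔ r.1.2} := by
      ext r; simp [hSdef, Eset, mem_setOf_eq]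
    rw [h1]
    have m1 : Measurable fun r : (ℝ × ℝ) × (ℝ × ℝ) => r.1.1 ⊓ r.1.2 :=
      (measurable_fst.fst).min (measurable_fst.snd)
    have m2 : Measurable fun r : (ℝ × ℝ) × (ℝ × ℝ) => r.2.1 ⊓ r.2.2 :=
      (measurable_snd.fst).min (measurable_snd.snd)
    have m3 : Measurable fun r : (ℝ × ℝ) × (ℝ × ℝ) => r.2.1 ⊔ r.2.2 :=
      (measurable_snd.fst).max (measurable_snd.snd)
    have m4 : Measurable fun r : (ℝ × ℝ) × (ℝ × ℝ) => r.1.1 ⊔ r.1.2 :=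
      (measurable_fst.fst).max (measurable_fst.snd)
    exact (measurableSet_le m1 m2).inter (measurableSet_lt m3 m4)
  have key : ∀ p : ℝ × ℝ, ENNReal.ofReal ((p.1 - p.2) ^ 2)
      = ∫⁻ q, S.indicator (1 : ((ℝ × ℝ) × (ℝ × ℝ)) → ℝ≥0∞) (p, q) ∂(volume.prod volume) := by
    intro p
    have h2 : ∀ q : ℝ × ℝ, S.indicator (1 : ((ℝ × ℝ) × (ℝ × ℝ)) → ℝ≥0∞) (p, q)
        = ({q : ℝ × ℝ | p ∈ Eset q}).indicator (1 : (ℝ × ℝ) → ℝ≥0∞) q := by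
      intro q
      simp only [indicator_apply, hSdef, mem_setOf_eq, Pi.one_apply]
    simp_rw [h2]
    rw [lintegral_indicator_one (by
      rw [Eset_section]
      exact (measurableSet_Ico.prod measurableSet_Ico))]
    exact (volume_prod_section p).symm
  calc Wcost π = ∫⁻ p, ∫⁻ q, S.indicator (1 : ((ℝ × ℝ) × (ℝ × ℝ)) → ℝ≥0∞) (p, q)
        ∂(volume.prod volume) ∂π := by
        unfold Wcost; congr 1; funext p; exact key p
    _ = ∫⁻ q, ∫⁻ p, S.indicator (1 : ((ℝ × ℝ) × (ℝ × ℝ)) → ℝ≥0∞) (p, q) ∂π ∂(volume.prod volume) := by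
        exact lintegral_lintegral_swap ((measurable_one.indicator hS).aemeasurable)
    _ = ∫⁻ q, π (Eset q) ∂(volume.prod volume) := by
        congr 1; funext q
        have h2 : ∀ p : ℝ × ℝ, S.indicator (1 : ((ℝ × ℝ) × (ℝ × ℝ)) → ℝ≥0∞) (p, q)
            = (Eset q).indicator (1 : (ℝ × ℝ) → ℝ≥0∞) p := by
          intro p
          simp only [indicator_apply, hSdef, mem_setOf_eq, Pi.one_apply]
        simp_rw [h2]
        exact lintegral_indicator_one (measurableSet_Eset q)

lemma preimage_fst_Iic (a : ℝ) : (Prod.fst ⁻¹' Iic a : Set (ℝ × ℝ)) = Iic a ×ˢ univ := by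
  ext p; simp [mem_prod]

lemma preimage_snd_Iic (a : ℝ) : (Prod.snd ⁻¹' Iic a : Set (ℝ × ℝ)) = univ ×ˢ Iic a := by
  ext p; simp [mem_prod]

/-- Lower bound for the `Eset` mass of an arbitrary coupling. -/
lemma le_coupling_Eset {π : Measure (ℝ × ℝ)} {ν₁ ν₂ : Measure ℝ}
    (hc : IsCoupling π ν₁ ν₂) (q : ℝ × ℝ) :
    (ν₁ (Iic (q.1 ⊓ q.2)) - ν₂ (Iic (q.1 ⊔ q.2)))
      + (ν₂ (Iic (q.1 ⊓ q.2)) - ν₁ (Iic (q.1 ⊔ q.2))) ≤ π (Eset q) := by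
  obtain ⟨hprob, hm1, hm2⟩ := hc
  set a := q.1 ⊓ q.2
  set b := q.1 ⊔ q.2
  have hab : a ≤ b := le_trans inf_le_left le_sup_left
  have hν₁ : ν₁ (Iic a) = π (Iic a ×ˢ (univ : Set ℝ)) := by
    rw [← hm1, Measure.map_apply measurable_fst measurableSet_Iic, preimage_fst_Iic]
  have hν₂ : ν₂ (Iic a) = π ((univ : Set ℝ) ×ˢ Iic a) := by
    rw [← hm2, Measure.map_apply measurable_snd measurableSet_Iic, preimage_snd_Iic]
  have key : ∀ (ρ : Measure (ℝ × ℝ)), ρ (Iic a ×ˢ (univ : Set ℝ))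
      = ρ (Iic a ×ˢ Ioi b) + ρ (Iic a ×ˢ Iic b) := by
    intro ρ
    rw [← measure_union (Set.disjoint_left.2 fun p hp1 hp2 => absurd hp2.2 (not_le.2 hp1.2))
      (measurableSet_Iic.prod measurableSet_Iic), ← prod_union, union_comm, Iic_union_Ioi]
  have key2 : ∀ (ρ : Measure (ℝ × ℝ)), ρ ((univ : Set ℝ) ×ˢ Iic a)
      = ρ (Ioi b ×ˢ Iic a) + ρ (Iic b ×ˢ Iic a) := by
    intro ρ
    rw [← measure_union (Set.disjoint_left.2 fun p hp1 hp2 => absurd hp2.1 (not_le.2 hp1.1))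
      ((measurableSet_Iic.prod measurableSet_Iic)), ← union_prod, union_comm, Iic_union_Ioi]
  have hb1 : π (Iic a ×ˢ Iic b) ≤ ν₂ (Iic b) := by
    rw [← hm2, Measure.map_apply measurable_snd measurableSet_Iic, preimage_snd_Iic]
    exact measure_mono (prod_mono_left (subset_univ _))
  have hb2 : π (Iic b ×ˢ Iic a) ≤ ν₁ (Iic b) := by
    rw [← hm1, Measure.map_apply measurable_fst measurableSet_Iic, preimage_fst_Iic]
    exact measure_mono (prod_mono_right (subset_univ _))
  have hA : ν₁ (Iic a) - ν₂ (Iic b) ≤ π (Iic a ×ˢ Ioi b) := by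
    rw [tsub_le_iff_right, hν₁, key π]
    exact add_le_add le_rfl hb1
  have hB : ν₂ (Iic a) - ν₁ (Iic b) ≤ π (Ioi b ×ˢ Iic a) := by
    rw [tsub_le_iff_right, hν₂, key2 π]
    exact add_le_add le_rfl hb2
  have hd : Disjoint (Iic a ×ˢ Ioi b) (Ioi b ×ˢ Iic a) :=
    Set.disjoint_left.2 fun p hp1 hp2 => absurd (hp1.1.trans hab) (not_le.2 hp2.1)
  rw [Eset_eq_union, measure_union hd (measurableSet_Ioi.prod measurableSet_Iic)]
  exact add_le_add hA hB

lemma downsets_nested {D E : Set ℝ} (hD : D ⊆ Ioo 0 1) (hE : E ⊆ Ioo 0 1)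
    (hDd : ∀ ⦃y⦄, y ∈ D → ∀ ⦃z⦄, z ∈ Ioo (0:ℝ) 1 → z ≤ y → z ∈ D)
    (hEd : ∀ ⦃y⦄, y ∈ E → ∀ ⦃z⦄, z ∈ Ioo (0:ℝ) 1 → z ≤ y → z ∈ E) :
    D ⊆ E ∨ E ⊆ D := by
  by_contra h
  push_neg at h
  obtain ⟨d, hdD, hdE⟩ := not_subset.1 h.1
  obtain ⟨e, heE, heD⟩ := not_subset.1 h.2
  rcases le_total d e with hde | hde
  · exact hdE (hEd heE (hD hdD) hde)
  · exact heD (hDd hdD (hE heE) hde)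

lemma unif_half {g₁ g₂ : ℝ → ℝ} (h1 : Measurable g₁) (h2 : Measurable g₂)
    (hm1 : MonotoneOn g₁ (Ioo 0 1)) (hm2 : MonotoneOn g₂ (Ioo 0 1)) (a b : ℝ) :
    unif (g₁ ⁻¹' Iic a ∩ g₂ ⁻¹' Ioi b)
      = (Measure.map g₁ unif) (Iic a) - (Measure.map g₂ unif) (Iic b) := by
  set D := g₁ ⁻¹' Iic a ∩ Ioo 0 1 with hDdef
  set D₂ := g₂ ⁻¹' Iic b ∩ Ioo 0 1 with hD₂def
  have hDm : MeasurableSet D := (h1 measurableSet_Iic).inter measurableSet_Ioo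
  have hD₂m : MeasurableSet D₂ := (h2 measurableSet_Iic).inter measurableSet_Ioo
  have hset : (g₁ ⁻¹' Iic a ∩ g₂ ⁻¹' Ioi b) ∩ Ioo 0 1 = D \ D₂ := by
    ext y
    simp only [hDdef, hD₂def, mem_inter_iff, mem_preimage, mem_Iic, mem_Ioi, mem_diff,
      not_and, mem_Ioo]
    constructor
    · rintro ⟨⟨hy1, hy2⟩, hy3⟩
      exact ⟨⟨hy1, hy3⟩, fun hb => absurd hy2 (not_lt.2 hb)⟩
    · rintro ⟨⟨hy1, hy3⟩, hnb⟩
      refine ⟨⟨hy1, ?_⟩, hy3⟩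
      by_contra hc
      exact (hnb (not_lt.1 hc) hy3.1 hy3.2).elim
  have hDvol : volume D = (Measure.map g₁ unif) (Iic a) := by
    rw [Measure.map_apply h1 measurableSet_Iic, unif_apply _ (h1 measurableSet_Iic)]
  have hD₂vol : volume D₂ = (Measure.map g₂ unif) (Iic b) := by
    rw [Measure.map_apply h2 measurableSet_Iic, unif_apply _ (h2 measurableSet_Iic)]
  rw [unif_apply _ ((h1 measurableSet_Iic).inter (h2 measurableSet_Ioi)), hset,
    ← hDvol, ← hD₂vol]
  have hDd : ∀ ⦃y⦄, y ∈ D → ∀ ⦃z⦄, z ∈ Ioo (0:ℝ) 1 → z ≤ y → z ∈ D := by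
    rintro y ⟨hy1, hy2⟩ z hz hzy
    exact ⟨le_trans (hm1 hz hy2 hzy) hy1, hz⟩
  have hD₂d : ∀ ⦃y⦄, y ∈ D₂ → ∀ ⦃z⦄, z ∈ Ioo (0:ℝ) 1 → z ≤ y → z ∈ D₂ := by
    rintro y ⟨hy1, hy2⟩ z hz hzy
    exact ⟨le_trans (hm2 hz hy2 hzy) hy1, hz⟩
  rcases downsets_nested inter_subset_right inter_subset_right hDd hD₂d with hsub | hsub
  · rw [diff_eq_empty.2 hsub, measure_empty,
      eq_comm, tsub_eq_zero_iff_le]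
    exact measure_mono hsub
  · rw [measure_diff hsub hD₂m.nullMeasurableSet
      (ne_top_of_le_ne_top (by simp [Real.volume_Ioo]) (measure_mono inter_subset_right))]

lemma map_pair_Eset {g₁ g₂ : ℝ → ℝ} (h1 : Measurable g₁) (h2 : Measurable g₂)
    (hm1 : MonotoneOn g₁ (Ioo 0 1)) (hm2 : MonotoneOn g₂ (Ioo 0 1)) (q : ℝ × ℝ) :
    (Measure.map (fun y => (g₁ y, g₂ y)) unif) (Eset q)
      = ((Measure.map g₁ unif) (Iic (q.1 ⊓ q.2)) - (Measure.map g₂ unif) (Iic (q.1 ⊔ q.2)))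
        + ((Measure.map g₂ unif) (Iic (q.1 ⊓ q.2))
            - (Measure.map g₁ unif) (Iic (q.1 ⊔ q.2))) := by
  set a := q.1 ⊓ q.2
  set b := q.1 ⊔ q.2
  have hab : a ≤ b := le_trans inf_le_left le_sup_left
  have hpair : Measurable fun y => (g₁ y, g₂ y) := h1.prodMk h2
  have hd : Disjoint (Iic a ×ˢ Ioi b) (Ioi b ×ˢ Iic a) :=
    Set.disjoint_left.2 fun p hp1 hp2 => absurd (hp1.1.trans hab) (not_le.2 hp2.1)
  rw [Measure.map_apply hpair (measurableSet_Eset q), Eset_eq_union]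
  rw [preimage_union, measure_union ?hdisj ?hmeas]
  case hdisj =>
    exact (hd.preimage _)
  case hmeas =>
    exact hpair (measurableSet_Ioi.prod measurableSet_Iic)
  have hp1 : (fun y => (g₁ y, g₂ y)) ⁻¹' (Iic a ×ˢ Ioi b) = g₁ ⁻¹' Iic a ∩ g₂ ⁻¹' Ioi b := by
    ext y; simp [mem_prod]
  have hp2 : (fun y => (g₁ y, g₂ y)) ⁻¹' (Ioi b ×ˢ Iic a) = g₂ ⁻¹' Iic a ∩ g₁ ⁻¹' Ioi b := by
    ext y; simp [mem_prod, and_comm]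
  rw [hp1, hp2, unif_half h1 h2 hm1 hm2 a b, unif_half h2 h1 hm2 hm1 a b]

lemma measurable_cost_integrand :
    Measurable fun p : ℝ × ℝ => ENNReal.ofReal ((p.1 - p.2) ^ 2) :=
  ENNReal.measurable_ofReal.comp ((measurable_fst.sub measurable_snd).pow_const 2)

/-- Master lemma: the optimal transport cost equals the cost of the monotone coupling. -/
lemma iInf_Wcost {ν₁ ν₂ : Measure ℝ} {g₁ g₂ : ℝ → ℝ} (h1 : Measurable g₁) (h2 : Measurable g₂)
    (hm1 : MonotoneOn g₁ (Ioo 0 1)) (hm2 : MonotoneOn g₂ (Ioo 0 1))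
    (hmap1 : Measure.map g₁ unif = ν₁) (hmap2 : Measure.map g₂ unif = ν₂) :
    (⨅ π : {π : Measure (ℝ × ℝ) // IsCoupling π ν₁ ν₂}, Wcost π.1)
      = ∫⁻ y, ENNReal.ofReal ((g₁ y - g₂ y) ^ 2) ∂unif := by
  have hpair : Measurable fun y => (g₁ y, g₂ y) := h1.prodMk h2
  set π₀ := Measure.map (fun y => (g₁ y, g₂ y)) unif with hπ₀
  haveI hπ₀p : IsProbabilityMeasure π₀ := Measure.isProbabilityMeasure_map hpair.aemeasurable
  have hcoup : IsCoupling π₀ ν₁ ν₂ := by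
    refine ⟨hπ₀p, ?_, ?_⟩
    · rw [hπ₀, Measure.map_map measurable_fst hpair]
      exact hmap1
    · rw [hπ₀, Measure.map_map measurable_snd hpair]
      exact hmap2
  have hcost : Wcost π₀ = ∫⁻ y, ENNReal.ofReal ((g₁ y - g₂ y) ^ 2) ∂unif := by
    rw [hπ₀, Wcost, lintegral_map measurable_cost_integrand hpair]
  refine le_antisymm ((iInf_le _ ⟨π₀, hcoup⟩).trans hcost.le) (le_iInf fun π => ?_)
  haveI := π.2.1
  rw [← hcost, Wcost_eq_lintegral π.1, Wcost_eq_lintegral π₀]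
  refine lintegral_mono fun q => ?_
  rw [hπ₀, map_pair_Eset h1 h2 hm1 hm2 q, hmap1, hmap2]
  exact le_coupling_Eset π.2 q

end WAux

open WAux Set Filter Topology ProbabilityTheory
open scoped ENNReal


section Bridge

open WAux Set Filter Topology ProbabilityTheory
open scoped ENNReal

lemma quantile_comp_ae (μ ν : Measure ℝ) [IsProbabilityMeasure μ] [IsProbabilityMeasure ν]
    (hμa : Atomless μ) :
    (fun x => quantile ν (cdf' μ x)) =ᵐ[μ] (fun x => qIoo ν (cdf' μ x)) := by
  have hnull : μ ({x | cdf' μ x = 0} ∪ {x | cdf' μ x = 1}) = 0 :=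
    measure_union_null cdf'_zero_null (cdf'_one_null hμa)
  refine measure_mono_null (fun x hx => ?_) hnull
  simp only [mem_setOf_eq, mem_union] at hx ⊢
  by_contra hc
  push_neg at hc
  have h0 : 0 < cdf' μ x := lt_of_le_of_ne (cdf'_nonneg x) (Ne.symm hc.1)
  have h1 : cdf' μ x < 1 := lt_of_le_of_ne (cdf'_le_one x) hc.2
  exact hx ((qIoo_eqOn ν ⟨h0, h1⟩).symm)

lemma expMap_eq (μ γ0 γ1 : Measure ℝ) [IsProbabilityMeasure μ] [IsProbabilityMeasure γ0]
    [IsProbabilityMeasure γ1] (hμa : Atomless μ) (t : ℝ) :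
    expMap μ (fun x => (1 - t) * logMap μ γ0 x + t * logMap μ γ1 x)
      = Measure.map (fun y => (1 - t) * qIoo γ0 y + t * qIoo γ1 y) unif := by
  have hfun : (fun x => x + ((1 - t) * logMap μ γ0 x + t * logMap μ γ1 x))
      = fun x => (1 - t) * quantile γ0 (cdf' μ x) + t * quantile γ1 (cdf' μ x) := by
    funext x; simp only [logMap]; ring
  have hG : Measurable fun y => (1 - t) * qIoo γ0 y + t * qIoo γ1 y :=
    (measurable_const.mul measurable_qIoo).add (measurable_const.mul measurable_qIoo)
  have hae : (fun x => (1 - t) * quantile γ0 (cdf' μ x) + t * quantile γ1 (cdf' μ x))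
      =ᵐ[μ] fun x => (1 - t) * qIoo γ0 (cdf' μ x) + t * qIoo γ1 (cdf' μ x) := by
    filter_upwards [quantile_comp_ae μ γ0 hμa, quantile_comp_ae μ γ1 hμa] with x h0 h1
    rw [h0, h1]
  rw [expMap, hfun, Measure.map_congr hae,
    show (fun x => (1 - t) * qIoo γ0 (cdf' μ x) + t * qIoo γ1 (cdf' μ x))
      = (fun y => (1 - t) * qIoo γ0 y + t * qIoo γ1 y) ∘ (cdf' μ) from rfl,
    ← Measure.map_map hG measurable_cdf', map_cdf' hμa]

lemma Wdist_eq {ν₁ ν₂ : Measure ℝ} {g₁ g₂ : ℝ → ℝ} (h1 : Measurable g₁) (h2 : Measurable g₂)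
    (hm1 : MonotoneOn g₁ (Set.Ioo 0 1)) (hm2 : MonotoneOn g₂ (Set.Ioo 0 1))
    (hmap1 : Measure.map g₁ unif = ν₁) (hmap2 : Measure.map g₂ unif = ν₂) :
    Wdist ν₁ ν₂ = Real.sqrt ((∫⁻ y, ENNReal.ofReal ((g₁ y - g₂ y) ^ 2) ∂unif).toReal) :=
  congrArg Real.sqrt (congrArg ENNReal.toReal (iInf_Wcost h1 h2 hm1 hm2 hmap1 hmap2))

end Bridge

/-- A curve `γ : [0,1] → W₂(ℝ)` is a constant-speed geodesic if and only if
`γ t = exp_μ((1 − t) v₀ + t v₁)` where `v₀ = log_μ(γ 0)`, `v₁ = log_μ(γ 1)`. -/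
theorem geodesic_iff_exp_of_segment (μ : Measure ℝ) (hμp : IsProbabilityMeasure μ)
    (hμa : Atomless μ) (hμ2 : FinSecondMoment μ)
    (γ : ℝ → Measure ℝ) (hγ : ∀ t ∈ Set.Icc (0 : ℝ) 1, MemW2 (γ t)) :
    (∀ s ∈ Set.Icc (0 : ℝ) 1, ∀ t ∈ Set.Icc (0 : ℝ) 1,
        Wdist (γ s) (γ t) = |s - t| * Wdist (γ 0) (γ 1)) ↔
      ∀ t ∈ Set.Icc (0 : ℝ) 1,
        γ t = expMap μ (fun x => (1 - t) * logMap μ (γ 0) x + t * logMap μ (γ 1) x) := by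
  haveI h0p : IsProbabilityMeasure (γ 0) := (hγ 0 ⟨le_rfl, zero_le_one⟩).1
  haveI h1p : IsProbabilityMeasure (γ 1) := (hγ 1 ⟨zero_le_one, le_rfl⟩).1
  set G : ℝ → ℝ → ℝ := fun r y => (1 - r) * qIoo (γ 0) y + r * qIoo (γ 1) y with hGdef
  have hGm : ∀ r, Measurable (G r) := fun r =>
    (measurable_const.mul measurable_qIoo).add (measurable_const.mul measurable_qIoo)
  have hGmono : ∀ r ∈ Set.Icc (0:ℝ) 1, MonotoneOn (G r) (Set.Ioo 0 1) := by
    intro r hr y hy z hz hyz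
    have q0 := monotoneOn_qIoo (ν := γ 0) hy hz hyz
    have q1 := monotoneOn_qIoo (ν := γ 1) hy hz hyz
    have h1r : (0:ℝ) ≤ 1 - r := by linarith [hr.2]
    exact add_le_add (mul_le_mul_of_nonneg_left q0 h1r) (mul_le_mul_of_nonneg_left q1 hr.1)
  constructor
  · -- forward direction
    intro hgeo t ht
    haveI htp : IsProbabilityMeasure (γ t) := (hγ t ht).1
    have hWq : ∀ u ∈ Set.Icc (0:ℝ) 1, ∀ v ∈ Set.Icc (0:ℝ) 1, Wdist (γ u) (γ v)
        = Real.sqrt ((∫⁻ y, ENNReal.ofReal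
            ((qIoo (γ u) y - qIoo (γ v) y) ^ 2) ∂unif).toReal) := by
      intro u hu v hv
      haveI := (hγ u hu).1; haveI := (hγ v hv).1
      exact Wdist_eq measurable_qIoo measurable_qIoo monotoneOn_qIoo monotoneOn_qIoo
        map_qIoo map_qIoo
    have hmom : ∀ u ∈ Set.Icc (0:ℝ) 1,
        ∫⁻ y, ENNReal.ofReal ((qIoo (γ u) y) ^ 2) ∂unif < ⊤ := by
      intro u hu
      haveI := (hγ u hu).1
      have heq : ∫⁻ y, ENNReal.ofReal ((qIoo (γ u) y) ^ 2) ∂unif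
          = ∫⁻ x, ENNReal.ofReal (x ^ 2) ∂(γ u) := by
        have hfm : Measurable fun x : ℝ => ENNReal.ofReal (x ^ 2) :=
          ENNReal.measurable_ofReal.comp (measurable_id.pow_const 2)
        conv_rhs => rw [← map_qIoo (ν := γ u)]
        rw [lintegral_map hfm measurable_qIoo]
      rw [heq]
      exact (hγ u hu).2
    have hTfin : ∀ u ∈ Set.Icc (0:ℝ) 1, ∀ v ∈ Set.Icc (0:ℝ) 1,
        (∫⁻ y, ENNReal.ofReal ((qIoo (γ u) y - qIoo (γ v) y) ^ 2) ∂unif) < ⊤ := by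
      intro u hu v hv
      haveI := (hγ u hu).1; haveI := (hγ v hv).1
      have hle : (∫⁻ y, ENNReal.ofReal ((qIoo (γ u) y - qIoo (γ v) y) ^ 2) ∂unif)
          ≤ ∫⁻ y, (2 * ENNReal.ofReal ((qIoo (γ u) y) ^ 2)
              + 2 * ENNReal.ofReal ((qIoo (γ v) y) ^ 2)) ∂unif := by
        refine lintegral_mono fun y => ?_
        calc ENNReal.ofReal ((qIoo (γ u) y - qIoo (γ v) y) ^ 2)
            ≤ ENNReal.ofReal (2 * (qIoo (γ u) y) ^ 2 + 2 * (qIoo (γ v) y) ^ 2) :=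
              ENNReal.ofReal_le_ofReal (by nlinarith [sq_nonneg (qIoo (γ u) y + qIoo (γ v) y)])
          _ ≤ ENNReal.ofReal (2 * (qIoo (γ u) y) ^ 2)
              + ENNReal.ofReal (2 * (qIoo (γ v) y) ^ 2) := ENNReal.ofReal_add_le
          _ = 2 * ENNReal.ofReal ((qIoo (γ u) y) ^ 2)
              + 2 * ENNReal.ofReal ((qIoo (γ v) y) ^ 2) := by
              rw [ENNReal.ofReal_mul (by norm_num : (0:ℝ) ≤ 2),
                ENNReal.ofReal_mul (by norm_num : (0:ℝ) ≤ 2), ENNReal.ofReal_ofNat]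
      refine lt_of_le_of_lt hle ?_
      have hmu : Measurable fun y => ENNReal.ofReal ((qIoo (γ u) y) ^ 2) :=
        ENNReal.measurable_ofReal.comp (measurable_qIoo.pow_const 2)
      have hmv : Measurable fun y => ENNReal.ofReal ((qIoo (γ v) y) ^ 2) :=
        ENNReal.measurable_ofReal.comp (measurable_qIoo.pow_const 2)
      rw [lintegral_add_left (hmu.const_mul 2), lintegral_const_mul 2 hmu,
        lintegral_const_mul 2 hmv]
      exact ENNReal.add_lt_top.2 ⟨ENNReal.mul_lt_top (by norm_num) (hmom u hu),
        ENNReal.mul_lt_top (by norm_num) (hmom v hv)⟩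
    set I : ℝ → ℝ → ℝ := fun u v =>
      (∫⁻ y, ENNReal.ofReal ((qIoo (γ u) y - qIoo (γ v) y) ^ 2) ∂unif).toReal with hIdef
    have hgeo' : ∀ u ∈ Set.Icc (0:ℝ) 1, ∀ v ∈ Set.Icc (0:ℝ) 1,
        I u v = (u - v) ^ 2 * I 0 1 := by
      intro u hu v hv
      have h := hgeo u hu v hv
      rw [hWq u hu v hv, hWq 0 ⟨le_rfl, zero_le_one⟩ 1 ⟨zero_le_one, le_rfl⟩] at h
      calc I u v = (Real.sqrt (I u v)) ^ 2 := (Real.sq_sqrt ENNReal.toReal_nonneg).symm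
        _ = (|u - v| * Real.sqrt (I 0 1)) ^ 2 := by rw [← h]
        _ = (u - v) ^ 2 * I 0 1 := by
            rw [mul_pow, sq_abs, Real.sq_sqrt ENNReal.toReal_nonneg]
    have hintg : ∀ u ∈ Set.Icc (0:ℝ) 1, ∀ v ∈ Set.Icc (0:ℝ) 1,
        Integrable (fun y => (qIoo (γ u) y - qIoo (γ v) y) ^ 2) unif := by
      intro u hu v hv
      haveI := (hγ u hu).1; haveI := (hγ v hv).1
      refine ⟨((measurable_qIoo.sub measurable_qIoo).pow_const 2).aestronglyMeasurable, ?_⟩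
      rw [hasFiniteIntegral_iff_ofReal (ae_of_all _ fun y => sq_nonneg _)]
      exact hTfin u hu v hv
    have hIeq : ∀ u ∈ Set.Icc (0:ℝ) 1, ∀ v ∈ Set.Icc (0:ℝ) 1,
        ∫ y, (qIoo (γ u) y - qIoo (γ v) y) ^ 2 ∂unif = I u v := by
      intro u hu v hv
      haveI := (hγ u hu).1; haveI := (hγ v hv).1
      rw [integral_eq_lintegral_of_nonneg_ae (f := fun y => (qIoo (γ u) y - qIoo (γ v) y) ^ 2)
        (ae_of_all _ fun y => sq_nonneg _)
        ((measurable_qIoo.sub measurable_qIoo).pow_const 2).aestronglyMeasurable]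
    have h0c : (0:ℝ) ∈ Set.Icc (0:ℝ) 1 := ⟨le_rfl, zero_le_one⟩
    have h1c : (1:ℝ) ∈ Set.Icc (0:ℝ) 1 := ⟨zero_le_one, le_rfl⟩
    have hpt : (fun y => (qIoo (γ t) y
        - ((1 - t) * qIoo (γ 0) y + t * qIoo (γ 1) y)) ^ 2)
        = fun y => (qIoo (γ t) y - qIoo (γ 0) y) ^ 2
          - t * ((qIoo (γ t) y - qIoo (γ 0) y) ^ 2 + (qIoo (γ 1) y - qIoo (γ 0) y) ^ 2
            - (qIoo (γ t) y - qIoo (γ 1) y) ^ 2)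
          + t ^ 2 * (qIoo (γ 1) y - qIoo (γ 0) y) ^ 2 := by
      funext y; ring
    have hIntH : Integrable (fun y => (qIoo (γ t) y
        - ((1 - t) * qIoo (γ 0) y + t * qIoo (γ 1) y)) ^ 2) unif := by
      rw [hpt]
      exact (((hintg t ht 0 h0c).sub ((((hintg t ht 0 h0c).add
        (hintg 1 h1c 0 h0c)).sub (hintg t ht 1 h1c)).const_mul t)).add
        ((hintg 1 h1c 0 h0c).const_mul (t ^ 2)))
    have intSum : Integrable (fun y => (qIoo (γ t) y - qIoo (γ 0) y) ^ 2
        + (qIoo (γ 1) y - qIoo (γ 0) y) ^ 2) unif := by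
      exact (hintg t ht 0 h0c).add (hintg 1 h1c 0 h0c)
    have intSum2 : Integrable (fun y => (qIoo (γ t) y - qIoo (γ 0) y) ^ 2
        + (qIoo (γ 1) y - qIoo (γ 0) y) ^ 2 - (qIoo (γ t) y - qIoo (γ 1) y) ^ 2) unif := by
      exact intSum.sub (hintg t ht 1 h1c)
    have intMul : Integrable (fun y => t * ((qIoo (γ t) y - qIoo (γ 0) y) ^ 2
        + (qIoo (γ 1) y - qIoo (γ 0) y) ^ 2 - (qIoo (γ t) y - qIoo (γ 1) y) ^ 2)) unif := by
      exact intSum2.const_mul t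
    have intA : Integrable (fun y => (qIoo (γ t) y - qIoo (γ 0) y) ^ 2
        - t * ((qIoo (γ t) y - qIoo (γ 0) y) ^ 2
          + (qIoo (γ 1) y - qIoo (γ 0) y) ^ 2 - (qIoo (γ t) y - qIoo (γ 1) y) ^ 2)) unif := by
      exact (hintg t ht 0 h0c).sub intMul
    have intB : Integrable (fun y => t ^ 2 * (qIoo (γ 1) y - qIoo (γ 0) y) ^ 2) unif := by
      exact (hintg 1 h1c 0 h0c).const_mul (t ^ 2)
    have key : ∫ y, (qIoo (γ t) y
        - ((1 - t) * qIoo (γ 0) y + t * qIoo (γ 1) y)) ^ 2 ∂unif = 0 := by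
      rw [hpt, integral_add intA intB,
        integral_sub (hintg t ht 0 h0c) intMul,
        MeasureTheory.integral_const_mul, MeasureTheory.integral_const_mul,
        integral_sub intSum (hintg t ht 1 h1c),
        integral_add (hintg t ht 0 h0c) (hintg 1 h1c 0 h0c),
        hIeq t ht 0 h0c, hIeq 1 h1c 0 h0c, hIeq t ht 1 h1c,
        hgeo' t ht 0 h0c, hgeo' 1 h1c 0 h0c, hgeo' t ht 1 h1c]
      ring
    have hz : (fun y => (qIoo (γ t) y
        - ((1 - t) * qIoo (γ 0) y + t * qIoo (γ 1) y)) ^ 2) =ᵐ[unif] 0 :=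
      (integral_eq_zero_iff_of_nonneg_ae (ae_of_all _ fun y => sq_nonneg _) hIntH).1 key
    have hae : qIoo (γ t) =ᵐ[unif] G t := by
      filter_upwards [hz] with y hy
      simp only [Pi.zero_apply] at hy
      have hy' := pow_eq_zero_iff (two_ne_zero) |>.1 hy
      have hgoal : qIoo (γ t) y = (1 - t) * qIoo (γ 0) y + t * qIoo (γ 1) y := by
        have := sub_eq_zero.1 hy'
        linarith [this]
      simpa [hGdef] using hgoal
    calc γ t = Measure.map (qIoo (γ t)) unif := (map_qIoo).symm
      _ = Measure.map (G t) unif := Measure.map_congr hae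
      _ = expMap μ (fun x => (1 - t) * logMap μ (γ 0) x + t * logMap μ (γ 1) x) :=
          (expMap_eq μ (γ 0) (γ 1) hμa t).symm
  · -- reverse direction
    intro hexp s hs t ht
    have hmap : ∀ r ∈ Set.Icc (0:ℝ) 1, Measure.map (G r) unif = γ r := fun r hr =>
      ((hexp r hr).trans (expMap_eq μ (γ 0) (γ 1) hμa r)).symm
    have hWst : Wdist (γ s) (γ t)
        = Real.sqrt ((∫⁻ y, ENNReal.ofReal ((G s y - G t y) ^ 2) ∂unif).toReal) :=
      Wdist_eq (hGm s) (hGm t) (hGmono s hs) (hGmono t ht) (hmap s hs) (hmap t ht)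
    have hW01 : Wdist (γ 0) (γ 1)
        = Real.sqrt ((∫⁻ y, ENNReal.ofReal ((G 0 y - G 1 y) ^ 2) ∂unif).toReal) :=
      Wdist_eq (hGm 0) (hGm 1) (hGmono 0 ⟨le_rfl, zero_le_one⟩)
        (hGmono 1 ⟨zero_le_one, le_rfl⟩) (hmap 0 ⟨le_rfl, zero_le_one⟩)
        (hmap 1 ⟨zero_le_one, le_rfl⟩)
    have hTm : Measurable fun y => ENNReal.ofReal ((qIoo (γ 1) y - qIoo (γ 0) y) ^ 2) :=
      ENNReal.measurable_ofReal.comp ((measurable_qIoo.sub measurable_qIoo).pow_const 2)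
    have hint : ∀ u v : ℝ, ∫⁻ y, ENNReal.ofReal ((G u y - G v y) ^ 2) ∂unif
        = ENNReal.ofReal ((u - v) ^ 2)
          * ∫⁻ y, ENNReal.ofReal ((qIoo (γ 1) y - qIoo (γ 0) y) ^ 2) ∂unif := by
      intro u v
      have hfac : ∀ y, ENNReal.ofReal ((G u y - G v y) ^ 2)
          = ENNReal.ofReal ((u - v) ^ 2)
            * ENNReal.ofReal ((qIoo (γ 1) y - qIoo (γ 0) y) ^ 2) := by
        intro y
        rw [← ENNReal.ofReal_mul (sq_nonneg _)]
        congr 1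
        simp only [hGdef]
        ring
      simp_rw [hfac]
      rw [lintegral_const_mul _ hTm]
    rw [hWst, hW01, hint, hint, ENNReal.toReal_mul, ENNReal.toReal_mul,
      ENNReal.toReal_ofReal (sq_nonneg _), ENNReal.toReal_ofReal (sq_nonneg _),
      Real.sqrt_mul (sq_nonneg _), Real.sqrt_mul (sq_nonneg _),
      Real.sqrt_sq_eq_abs, Real.sqrt_sq_eq_abs]
    norm_num
end
end

section
/- Let H be a separable real Hilbert space, X ⊆ H a compact convex set, x₀ ∈ X, and k ≥ 1 an integer. Then the family CC_k(X) of nonempty closed convex subsets C ⊆ X with dim(C) ≤ k, and the subfamily CC_{x₀,k}(X) of those C ∈ CC_k(X) that contain x₀, are both compact subsets of the space CL(X) of nonempty closed subsets of X endowed with the Hausdorff distance. -/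
open MeasureTheory TopologicalSpace

noncomputable section

/-- `dim(C) ≤ k`: the smallest affine subspace containing `C` has dimension at most `k`. -/
def DimLE {H : Type*} [NormedAddCommGroup H] [InnerProductSpace ℝ H]
    (C : Set H) (k : ℕ) : Prop :=
  Module.rank ℝ (affineSpan ℝ C).direction ≤ (k : Cardinal)

open Metric Set Filter Topology

section Aux

set_option linter.unusedSectionVars false

variable {H : Type*} [NormedAddCommGroup H] [InnerProductSpace ℝ H]

lemma dimLE_iff {C : Set H} (hC : C.Nonempty) (k : ℕ) :
    DimLE C k ↔ ∀ c ∈ C, ∀ f : Fin (k + 1) → H, (∀ i, f i ∈ C) →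
      ¬ LinearIndependent ℝ (fun i => f i - c) := by
  constructor
  · intro h c hc f hf hli
    set V := (affineSpan ℝ C).direction
    have hmem : ∀ i, f i - c ∈ V := by
      intro i
      show f i - c ∈ (affineSpan ℝ C).direction
      rw [direction_affineSpan]
      exact vsub_mem_vectorSpan ℝ (hf i) hc
    let g : Fin (k + 1) → V := fun i => ⟨f i - c, hmem i⟩
    have hg : LinearIndependent ℝ g := by
      apply LinearIndependent.of_comp V.subtype
      exact hli
    have h1 := hg.cardinal_lift_le_rank
    simp only [Cardinal.mk_fin, Cardinal.lift_natCast] at h1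
    have h2 : Cardinal.lift.{0} (Module.rank ℝ V) ≤ Cardinal.lift.{0} ((k : Cardinal)) :=
      Cardinal.lift_le.mpr h
    rw [Cardinal.lift_natCast] at h2
    have := h1.trans h2
    rw [Nat.cast_le] at this
    omega
  · intro h
    by_contra hlt
    rw [DimLE, not_le] at hlt
    obtain ⟨c, hc⟩ := hC
    rw [direction_affineSpan, vectorSpan_eq_span_vsub_set_right ℝ hc] at hlt
    obtain ⟨b, hbS, hspan, hbli⟩ := exists_linearIndependent ℝ ((· -ᵥ c) '' C)
    rw [← hspan, rank_span_set hbli] at hlt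
    have hcard : ((k + 1 : ℕ) : Cardinal) ≤ Cardinal.mk b := by
      push_cast
      exact (Cardinal.add_one_le_succ _).trans (Order.succ_le_of_lt hlt)
    have hcard' : Cardinal.mk (ULift.{_} (Fin (k + 1))) ≤ Cardinal.mk b := by
      simpa using hcard
    obtain ⟨e0⟩ := (Cardinal.le_def _ _).mp hcard'
    let e : Fin (k + 1) ↪ b := (Equiv.ulift.symm.toEmbedding).trans e0
    have hmem : ∀ i : Fin (k + 1), ((e i : H) + c) ∈ C := by
      intro i
      have : (e i : H) ∈ (· -ᵥ c) '' C := hbS (e i).2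
      obtain ⟨x, hx, hxe⟩ := this
      have : x = (e i : H) + c := by
        rw [← hxe]; simp [vsub_eq_sub]
      rwa [← this]
    refine h c hc (fun i => (e i : H) + c) hmem ?_
    have : (fun i : Fin (k+1) => ((e i : H) + c) - c) = fun i => (e i : H) := by
      funext i; exact add_sub_cancel_right _ _
    rw [this]
    exact hbli.comp e e.injective

section limits

lemma edist_ne_top' (s t : NonemptyCompacts H) :
    EMetric.hausdorffEdist (s : Set H) (t : Set H) ≠ ⊤ :=
  Metric.hausdorffEdist_ne_top_of_nonempty_of_bounded s.nonempty t.nonempty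
    s.isCompact.isBounded t.isCompact.isBounded

lemma mem_limit {Cs : ℕ → NonemptyCompacts H} {C : NonemptyCompacts H}
    (h : Tendsto Cs atTop (𝓝 C)) {u : ℕ → H} (hu : ∀ n, u n ∈ (Cs n : Set H))
    {x : H} (hx : Tendsto u atTop (𝓝 x)) : x ∈ (C : Set H) := by
  have hbd : ∀ n, Metric.infDist x (C : Set H) ≤ dist x (u n) + dist (Cs n) C := by
    intro n
    have h1 : Metric.infDist x (C : Set H) ≤ Metric.infDist (u n) (C : Set H) + dist x (u n) :=
      Metric.infDist_le_infDist_add_dist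
    have h2 : Metric.infDist (u n) (C : Set H) ≤ Metric.hausdorffDist (Cs n : Set H) C :=
      Metric.infDist_le_hausdorffDist_of_mem (hu n) (edist_ne_top' _ _)
    rw [← NonemptyCompacts.dist_eq] at h2
    linarith
  have hlim : Tendsto (fun n => dist x (u n) + dist (Cs n) C) atTop (𝓝 0) := by
    have h1 : Tendsto (fun n => dist x (u n)) atTop (𝓝 0) := by
      rw [tendsto_iff_dist_tendsto_zero] at hx
      simpa [dist_comm] using hx
    have h2 : Tendsto (fun n => dist (Cs n) C) atTop (𝓝 0) :=
      tendsto_iff_dist_tendsto_zero.mp h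
    simpa using h1.add h2
  have h0 : Metric.infDist x (C : Set H) ≤ 0 := ge_of_tendsto' hlim hbd
  have := le_antisymm h0 Metric.infDist_nonneg
  exact ((C.isCompact.isClosed.mem_iff_infDist_zero C.nonempty).2 this)

lemma approx_seq {Cs : ℕ → NonemptyCompacts H} {C : NonemptyCompacts H}
    (h : Tendsto Cs atTop (𝓝 C)) {x : H} (hx : x ∈ (C : Set H)) :
    ∃ u : ℕ → H, (∀ n, u n ∈ (Cs n : Set H)) ∧ Tendsto u atTop (𝓝 x) := by
  have : ∀ n : ℕ, ∃ y ∈ (Cs n : Set H), Metric.infDist x (Cs n : Set H) = dist x y :=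
    fun n => (Cs n).isCompact.exists_infDist_eq_dist (Cs n).nonempty x
  choose u hu hud using this
  refine ⟨u, hu, ?_⟩
  rw [tendsto_iff_dist_tendsto_zero]
  apply squeeze_zero (fun n => dist_nonneg) (g := fun n => dist (Cs n) C)
  · intro n
    rw [dist_comm, ← hud n]
    have := Metric.infDist_le_hausdorffDist_of_mem hx (edist_ne_top' C (Cs n))
    rw [← NonemptyCompacts.dist_eq, dist_comm] at this
    exact this
  · exact tendsto_iff_dist_tendsto_zero.mp h

lemma isClosed_subsets (X : Set H) (hX : IsClosed X) :
    IsClosed {C : NonemptyCompacts H | (C : Set H) ⊆ X} := by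
  apply IsSeqClosed.isClosed
  intro Cs C hmem hlim x hx
  obtain ⟨u, hu, hux⟩ := approx_seq hlim hx
  exact hX.mem_of_tendsto hux (Filter.Eventually.of_forall fun n => hmem n (hu n))

lemma isClosed_convex :
    IsClosed {C : NonemptyCompacts H | Convex ℝ (C : Set H)} := by
  apply IsSeqClosed.isClosed
  intro Cs C hmem hlim x hx y hy a b ha hb hab
  obtain ⟨u, hu, hux⟩ := approx_seq hlim hx
  obtain ⟨v, hv, hvy⟩ := approx_seq hlim hy
  refine mem_limit hlim (u := fun n => a • u n + b • v n)
    (fun n => hmem n (hu n) (hv n) ha hb hab) ?_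
  exact (hux.const_smul a).add (hvy.const_smul b)

lemma isClosed_mem (x₀ : H) :
    IsClosed {C : NonemptyCompacts H | x₀ ∈ (C : Set H)} := by
  apply IsSeqClosed.isClosed
  intro Cs C hmem hlim
  exact mem_limit hlim hmem tendsto_const_nhds

lemma isClosed_dimLE (k : ℕ) :
    IsClosed {C : NonemptyCompacts H | DimLE (C : Set H) k} := by
  apply IsSeqClosed.isClosed
  intro Cs C hmem hlim
  rw [Set.mem_setOf_eq, dimLE_iff C.nonempty]
  intro c hc f hf hli
  obtain ⟨uc, huc, hucc⟩ := approx_seq hlim hc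
  have hfa : ∀ i : Fin (k+1), ∃ u : ℕ → H, (∀ n, u n ∈ (Cs n : Set H)) ∧
      Tendsto u atTop (𝓝 (f i)) := fun i => approx_seq hlim (hf i)
  choose u hu hut using hfa
  have htend : Tendsto (fun n => fun i : Fin (k+1) => u i n - uc n) atTop
      (𝓝 (fun i => f i - c)) := by
    rw [tendsto_pi_nhds]
    intro i
    exact (hut i).sub hucc
  have hev := htend.eventually hli.eventually
  obtain ⟨n, hn⟩ := hev.exists
  exact (dimLE_iff (Cs n).nonempty k).mp (hmem n) (uc n) (huc n)
    (fun i => u i n) (fun i => hu i n) hn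

end limits

lemma isCompact_K {X : Set H} (hXc : IsCompact X) :
    IsCompact {C : NonemptyCompacts H | (C : Set H) ⊆ X} := by
  haveI : CompactSpace ↥X := isCompact_iff_compactSpace.mp hXc
  let F : NonemptyCompacts ↥X → NonemptyCompacts H := fun D =>
    ⟨⟨Subtype.val '' (D : Set ↥X), D.isCompact.image continuous_subtype_val⟩,
      D.nonempty.image _⟩
  have hF : Isometry F := fun D E =>
    EMetric.hausdorffEdist_image isometry_subtype_coe
  have hrange : Set.range F = {C : NonemptyCompacts H | (C : Set H) ⊆ X} := by
    ext C
    constructor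
    · rintro ⟨D, rfl⟩
      exact Subtype.coe_image_subset X _
    · intro hCX
      have hpre : IsCompact (Subtype.val ⁻¹' (C : Set H) : Set ↥X) :=
        (C.isCompact.isClosed.preimage continuous_subtype_val).isCompact
      have hpne : (Subtype.val ⁻¹' (C : Set H) : Set ↥X).Nonempty := by
        obtain ⟨x, hx⟩ := C.nonempty
        exact ⟨⟨x, hCX hx⟩, hx⟩
      refine ⟨⟨⟨Subtype.val ⁻¹' (C : Set H), hpre⟩, hpne⟩, ?_⟩
      apply NonemptyCompacts.ext
      simp only [F]
      apply Set.image_preimage_eq_of_subset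
      rw [Subtype.range_coe]
      exact hCX
  rw [← hrange]
  exact isCompact_range hF.continuous

end Aux

/-- For a compact convex subset `X` of a separable Hilbert space, the family
`CC_k(X)` of nonempty closed convex subsets of `X` of dimension at most `k`, and the
subfamily `CC_{x₀,k}(X)` of its members containing `x₀`, are compact subsets of the
space of nonempty closed subsets of `X` with the Hausdorff distance. -/
theorem CCk_compact
    {H : Type*} [NormedAddCommGroup H] [InnerProductSpace ℝ H] [CompleteSpace H]
    [SecondCountableTopology H]
    (X : Set H) (hXc : IsCompact X) (hXconv : Convex ℝ X)
    (x₀ : H) (hx₀ : x₀ ∈ X) (k : ℕ) (hk : 1 ≤ k) :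
    IsCompact {C : {C : NonemptyCompacts H // (C : Set H) ⊆ X} |
        Convex ℝ (C.1 : Set H) ∧ DimLE (C.1 : Set H) k} ∧
    IsCompact {C : {C : NonemptyCompacts H // (C : Set H) ⊆ X} |
        Convex ℝ (C.1 : Set H) ∧ DimLE (C.1 : Set H) k ∧ x₀ ∈ (C.1 : Set H)} := by
  have hK := isCompact_K hXc
  constructor
  · rw [Subtype.isCompact_iff]
    have himg : (Subtype.val '' {C : {C : NonemptyCompacts H // (C : Set H) ⊆ X} |
        Convex ℝ (C.1 : Set H) ∧ DimLE (C.1 : Set H) k})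
        = {C : NonemptyCompacts H | (C : Set H) ⊆ X} ∩
          ({C : NonemptyCompacts H | Convex ℝ (C : Set H)} ∩
           {C : NonemptyCompacts H | DimLE (C : Set H) k}) := by
      ext C
      constructor
      · rintro ⟨⟨D, hDX⟩, ⟨h1, h2⟩, rfl⟩
        exact ⟨hDX, h1, h2⟩
      · rintro ⟨h1, h2, h3⟩
        exact ⟨⟨C, h1⟩, ⟨h2, h3⟩, rfl⟩
    rw [himg]
    exact hK.inter_right (isClosed_convex.inter (isClosed_dimLE k))
  · rw [Subtype.isCompact_iff]
    have himg : (Subtype.val '' {C : {C : NonemptyCompacts H // (C : Set H) ⊆ X} |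
        Convex ℝ (C.1 : Set H) ∧ DimLE (C.1 : Set H) k ∧ x₀ ∈ (C.1 : Set H)})
        = {C : NonemptyCompacts H | (C : Set H) ⊆ X} ∩
          ({C : NonemptyCompacts H | Convex ℝ (C : Set H)} ∩
           ({C : NonemptyCompacts H | DimLE (C : Set H) k} ∩
            {C : NonemptyCompacts H | x₀ ∈ (C : Set H)})) := by
      ext C
      constructor
      · rintro ⟨⟨D, hDX⟩, ⟨h1, h2, h4⟩, rfl⟩
        exact ⟨hDX, h1, h2, h4⟩
      · rintro ⟨h1, h2, h3, h4⟩
        exact ⟨⟨C, h1⟩, ⟨h2, h3, h4⟩, rfl⟩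
    rw [himg]
    exact hK.inter_right (isClosed_convex.inter ((isClosed_dimLE k).inter (isClosed_mem x₀)))
end
end

section
/- Let H be a separable real Hilbert space with dim H ≥ k, X ⊆ H a closed convex set, x₀ ∈ X, and P a Borel probability measure on H with P(X) = 1 and ∫ ‖x‖² dP(x) < ∞. For an orthonormal family U = {u₁,…,u_k} ⊆ H set C_U = (x₀ + span(U)) ∩ X and H_X(U) = K_X(C_U), where K_X(C) = ∫ d(x, C)² dP(x). If U* = {u*₁,…,u*_k} is an orthonormal family minimizing H_X over all orthonormal families of cardinality k, then C_{U*} minimizes K_X over CC_{x₀,k}(X), i.e. C_{U*} is a (k, x₀)-global principal convex component. -/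
open MeasureTheory

noncomputable section

/-- `C ∈ CC_{x₀,k}(X)`: `C` is a nonempty closed convex subset of `X` containing `x₀`
with `dim(C) ≤ k`. -/
def MemCC {H : Type*} [NormedAddCommGroup H] [InnerProductSpace ℝ H]
    (X : Set H) (x₀ : H) (k : ℕ) (C : Set H) : Prop :=
  C.Nonempty ∧ IsClosed C ∧ C ⊆ X ∧ Convex ℝ C ∧ x₀ ∈ C ∧ DimLE C k

/-- `C_U = (x₀ + span U) ∩ X` for a family `U = (u i)`. -/
def CU {H : Type*} [NormedAddCommGroup H] [InnerProductSpace ℝ H]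
    (X : Set H) (x₀ : H) {k : ℕ} (u : Fin k → H) : Set H :=
  ((fun z => x₀ + z) '' (Submodule.span ℝ (Set.range u) : Set H)) ∩ X

-- auxiliary: extend a linearly independent family to size `k`
lemma extend_li {H : Type*} [NormedAddCommGroup H] [InnerProductSpace ℝ H]
    {n k : ℕ} (hnk : n ≤ k) (hdim : (k : Cardinal) ≤ Module.rank ℝ H)
    (f : Fin n → H) (hf : LinearIndependent ℝ f) :
    ∃ g : Fin k → H, LinearIndependent ℝ g ∧
      Submodule.span ℝ (Set.range f) ≤ Submodule.span ℝ (Set.range g) := by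
  induction k with
  | zero =>
      have : n = 0 := Nat.le_zero.mp hnk
      subst this
      exact ⟨f, hf, le_rfl⟩
  | succ m ih =>
      rcases Nat.lt_or_ge n (m+1) with h | h
      · obtain ⟨g, hg, hle⟩ := ih (Nat.lt_succ_iff.mp h)
          (le_trans (by exact_mod_cast Nat.cast_le.mpr (Nat.le_succ m)) hdim)
        obtain ⟨x, hx⟩ := exists_linearIndependent_snoc_of_lt_rank hg
          (lt_of_lt_of_le (by exact_mod_cast Nat.lt_succ_self m) hdim)
        refine ⟨Fin.snoc g x, hx, le_trans hle (Submodule.span_mono ?_)⟩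
        intro y hy
        obtain ⟨i, rfl⟩ := hy
        exact ⟨i.castSucc, by simp⟩
      · have : n = m + 1 := le_antisymm hnk h
        subst this
        exact ⟨f, hf, le_rfl⟩

/-- There is an orthonormal family of size `k` whose span contains a given
submodule of rank ≤ `k`. -/
lemma exists_orthonormal_span_le {H : Type*} [NormedAddCommGroup H] [InnerProductSpace ℝ H]
    (k : ℕ) (hdim : (k : Cardinal) ≤ Module.rank ℝ H)
    (V : Submodule ℝ H) (hV : Module.rank ℝ V ≤ (k : Cardinal)) :
    ∃ w : Fin k → H, Orthonormal ℝ w ∧ V ≤ Submodule.span ℝ (Set.range w) := by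
  haveI : WellFoundedLT (Fin k) := inferInstance
  haveI : Module.Free ℝ V := Module.Free.of_divisionRing ℝ V
  have hfin : FiniteDimensional ℝ V :=
    Module.rank_lt_aleph0_iff.mp (lt_of_le_of_lt hV (Cardinal.nat_lt_aleph0 k))
  set n := Module.finrank ℝ V with hn
  have hnk : n ≤ k := by
    have := Module.finrank_le_of_rank_le (M := V) hV
    exact this
  -- basis of V viewed in H
  let b := Module.finBasis ℝ V
  let f : Fin n → H := fun i => (b i : H)
  have hf : LinearIndependent ℝ f :=
    (b.linearIndependent.map' V.subtype V.ker_subtype)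
  have hspanf : V ≤ Submodule.span ℝ (Set.range f) := by
    intro v hv
    have : (⟨v, hv⟩ : V) ∈ (⊤ : Submodule ℝ V) := trivial
    rw [← b.span_eq] at this
    have := Submodule.mem_map_of_mem (f := V.subtype) this
    rw [Submodule.map_span] at this
    simpa [f, ← Set.range_comp, Function.comp_def] using this
  obtain ⟨g, hg, hle⟩ := extend_li hnk hdim f hf
  refine ⟨InnerProductSpace.gramSchmidtNormed ℝ g, InnerProductSpace.gramSchmidtNormed_orthonormal hg, ?_⟩
  rw [InnerProductSpace.span_gramSchmidtNormed_range, InnerProductSpace.span_gramSchmidt]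
  exact le_trans hspanf hle

/-- If an orthonormal family `U*` of cardinality `k` minimizes
`H_X(U) = K_X((x₀ + span U) ∩ X)` over all orthonormal families of cardinality `k`,
then `C_{U*} = (x₀ + span U*) ∩ X` minimizes `K_X` over `CC_{x₀,k}(X)`; i.e. it is a
`(k, x₀)`-global principal convex component. -/
theorem orthonormal_minimizer_is_GPCC
    {H : Type*} [NormedAddCommGroup H] [InnerProductSpace ℝ H] [CompleteSpace H]
    [SecondCountableTopology H] [MeasurableSpace H] [BorelSpace H]
    (k : ℕ) (hk : 1 ≤ k) (hdim : (k : Cardinal) ≤ Module.rank ℝ H)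
    (X : Set H) (hXcl : IsClosed X) (hXconv : Convex ℝ X)
    (x₀ : H) (hx₀ : x₀ ∈ X)
    (P : Measure H) (hP : IsProbabilityMeasure P) (hPX : P X = 1)
    (hmom : ∫⁻ x, ‖x‖₊ ^ 2 ∂P < ⊤)
    (u : Fin k → H) (hu : Orthonormal ℝ u)
    (hmin : ∀ w : Fin k → H, Orthonormal ℝ w →
      ∫ x, Metric.infDist x (CU X x₀ u) ^ 2 ∂P ≤ ∫ x, Metric.infDist x (CU X x₀ w) ^ 2 ∂P) :
    ∀ C : Set H, MemCC X x₀ k C →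
      ∫ x, Metric.infDist x (CU X x₀ u) ^ 2 ∂P ≤ ∫ x, Metric.infDist x C ^ 2 ∂P := by

  intro C hC
  obtain ⟨hCne, hCcl, hCX, hCconv, hx₀C, hCdim⟩ := hC
  -- direction of the affine span of C
  set V := (affineSpan ℝ C).direction with hV
  obtain ⟨w, hw, hVle⟩ := exists_orthonormal_span_le k hdim V hCdim
  -- C ⊆ CU X x₀ w
  have hsub : C ⊆ CU X x₀ w := by
    intro c hc
    refine ⟨⟨c - x₀, ?_, by simp⟩, hCX hc⟩
    have : c -ᵥ x₀ ∈ V :=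
      AffineSubspace.vsub_mem_direction (subset_affineSpan ℝ C hc) (subset_affineSpan ℝ C hx₀C)
    exact hVle this
  -- integrability of the dominating function
  have hnormsq : Integrable (fun x : H => ‖x‖ ^ 2) P := by
    refine ⟨(continuous_norm.pow 2).aestronglyMeasurable, ?_⟩
    rw [hasFiniteIntegral_def]
    calc ∫⁻ x, ‖(‖x‖ ^ 2 : ℝ)‖₊ ∂P = ∫⁻ x, (‖x‖₊ : ENNReal) ^ 2 ∂P := by
          refine lintegral_congr fun x => ?_
          congr 1
          ext
          simp [NNReal.coe_pow]
      _ < ⊤ := hmom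
  have hdom : Integrable (fun x : H => 2 * ‖x‖ ^ 2 + 2 * ‖x₀‖ ^ 2) P :=
    (hnormsq.const_mul 2).add (integrable_const _)
  -- integrability of x ↦ infDist x C ^ 2
  have hgint : Integrable (fun x : H => Metric.infDist x C ^ 2) P := by
    refine Integrable.mono' hdom
      (((Metric.continuous_infDist_pt C).pow 2).aestronglyMeasurable) ?_
    refine Filter.Eventually.of_forall fun x => ?_
    have h1 : Metric.infDist x C ≤ dist x x₀ := Metric.infDist_le_dist_of_mem hx₀C
    have h2 : (0 : ℝ) ≤ Metric.infDist x C := Metric.infDist_nonneg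
    have h3 : dist x x₀ ≤ ‖x‖ + ‖x₀‖ := by
      rw [dist_eq_norm]
      exact (norm_sub_le x x₀)
    have h4 : Metric.infDist x C ^ 2 ≤ (‖x‖ + ‖x₀‖) ^ 2 := by
      apply pow_le_pow_left₀ h2 (le_trans h1 h3)
    rw [Real.norm_of_nonneg (pow_nonneg h2 2)]
    nlinarith [norm_nonneg x, norm_nonneg x₀, sq_nonneg (‖x‖ - ‖x₀‖)]
  -- pointwise comparison
  have hptw : ∀ x : H, Metric.infDist x (CU X x₀ w) ^ 2 ≤ Metric.infDist x C ^ 2 := by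
    intro x
    have := Metric.infDist_le_infDist_of_subset (x := x) hsub hCne
    exact pow_le_pow_left₀ Metric.infDist_nonneg this 2
  calc ∫ x, Metric.infDist x (CU X x₀ u) ^ 2 ∂P
      ≤ ∫ x, Metric.infDist x (CU X x₀ w) ^ 2 ∂P := hmin w hw
    _ ≤ ∫ x, Metric.infDist x C ^ 2 ∂P := by
        refine integral_mono_of_nonneg
          (Filter.Eventually.of_forall fun x => by positivity) hgint
          (Filter.Eventually.of_forall hptw)
end
end

section
/- Let H be a separable real Hilbert space with dim H ≥ k, X ⊆ H a closed convex set, x₀ ∈ X, and let x be an X-valued Bochner square-integrable random element (E‖x‖² < ∞). Suppose Ũ = {ũ₁,…,ũ_k} ⊆ H is an orthonormal family minimizing U ↦ E‖x − Π_{x₀+span(U)}(x)‖² over all orthonormal families U of cardinality k (equivalently, Ũ consists of orthonormal eigenvectors associated with the k largest eigenvalues of the covariance operator K y = E⟨x − x₀, y⟩(x − x₀)). If Π_{x₀+span(Ũ)}(x) ∈ X almost surely, then C_Ũ = (x₀ + span(Ũ)) ∩ X minimizes K_X(C) = E d(x, C)² over CC_{x₀,k}(X), i.e. C_Ũ is a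 (k, x₀)-global principal convex component. -/
open MeasureTheory

noncomputable section

/-- The orthogonal projection onto the affine subspace `x₀ + span(w)`, for an
orthonormal family `w`: `y ↦ x₀ + ∑ i ⟨y − x₀, w i⟩ w i`. -/
noncomputable def projAff {H : Type*} [NormedAddCommGroup H] [InnerProductSpace ℝ H]
    {k : ℕ} (x₀ : H) (w : Fin k → H) (y : H) : H :=
  x₀ + ∑ i, (inner ℝ (y - x₀) (w i) : ℝ) • w i

section AuxLemmas
variable {H : Type*} [NormedAddCommGroup H] [InnerProductSpace ℝ H]

variable {H : Type*} [NormedAddCommGroup H] [InnerProductSpace ℝ H]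

lemma inner_sub_projAff {k : ℕ} (x₀ : H) {w : Fin k → H} (hw : Orthonormal ℝ w) (y : H)
    (i : Fin k) : (inner ℝ (y - projAff x₀ w y) (w i) : ℝ) = 0 := by
  have h : y - projAff x₀ w y = (y - x₀) - ∑ j, (inner ℝ (y - x₀) (w j) : ℝ) • w j := by
    simp only [projAff]; abel
  rw [h, inner_sub_left, sum_inner]
  simp [real_inner_smul_left, orthonormal_iff_ite.mp hw]

lemma inner_sub_projAff_span {k : ℕ} (x₀ : H) {w : Fin k → H} (hw : Orthonormal ℝ w) (y : H)
    {v : H} (hv : v ∈ Submodule.span ℝ (Set.range w)) :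
    (inner ℝ (y - projAff x₀ w y) v : ℝ) = 0 := by
  induction hv using Submodule.span_induction with
  | mem z hz => obtain ⟨i, rfl⟩ := hz; exact inner_sub_projAff x₀ hw y i
  | zero => simp
  | add a b _ _ ha hb => rw [inner_add_right, ha, hb]; ring
  | smul r a _ ha => rw [real_inner_smul_right, ha]; ring

lemma projAff_mem {k : ℕ} (x₀ : H) (w : Fin k → H) (y : H) :
    projAff x₀ w y ∈ (fun z => x₀ + z) '' (Submodule.span ℝ (Set.range w) : Set H) :=
  ⟨∑ i, (inner ℝ (y - x₀) (w i) : ℝ) • w i,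
    Submodule.sum_mem _ fun i _ => Submodule.smul_mem _ _ (Submodule.subset_span ⟨i, rfl⟩), rfl⟩

lemma norm_sub_projAff_le {k : ℕ} (x₀ : H) {w : Fin k → H} (hw : Orthonormal ℝ w) (y c : H)
    (hc : c ∈ (fun z => x₀ + z) '' (Submodule.span ℝ (Set.range w) : Set H)) :
    ‖y - projAff x₀ w y‖ ≤ ‖y - c‖ := by
  obtain ⟨s, hs, rfl⟩ := hc
  have hmem : projAff x₀ w y - (x₀ + s) ∈ Submodule.span ℝ (Set.range w) := by
    have : projAff x₀ w y - (x₀ + s) = (∑ i, (inner ℝ (y - x₀) (w i) : ℝ) • w i) - s := by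
      simp only [projAff]; abel
    rw [this]
    exact Submodule.sub_mem _ (Submodule.sum_mem _ fun i _ =>
      Submodule.smul_mem _ _ (Submodule.subset_span ⟨i, rfl⟩)) hs
  have hdecomp : y - (x₀ + s) = (y - projAff x₀ w y) + (projAff x₀ w y - (x₀ + s)) := by abel
  have hsq : ‖y - (x₀ + s)‖ ^ 2 = ‖y - projAff x₀ w y‖ ^ 2 + ‖projAff x₀ w y - (x₀ + s)‖ ^ 2 := by
    rw [hdecomp, norm_add_sq_real, inner_sub_projAff_span x₀ hw y hmem]
    ring
  have h2 : ‖y - projAff x₀ w y‖ ^ 2 ≤ ‖y - (x₀ + s)‖ ^ 2 := by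
    nlinarith [sq_nonneg ‖projAff x₀ w y - (x₀ + s)‖, hsq]
  exact (pow_le_pow_iff_left₀ (norm_nonneg _) (norm_nonneg _) two_ne_zero).mp
    (by simpa using h2)

end AuxLemmas

set_option synthInstance.maxHeartbeats 1000000 in
lemma exists_orthonormal_superset {H : Type*} [NormedAddCommGroup H] [InnerProductSpace ℝ H]
    [CompleteSpace H] (k : ℕ) (hdim : (k : Cardinal) ≤ Module.rank ℝ H)
    (x₀ : H) (C : Set H) (hx₀C : x₀ ∈ C)
    (hrank : Module.rank ℝ (affineSpan ℝ C).direction ≤ (k : Cardinal)) :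
    ∃ w : Fin k → H, Orthonormal ℝ w ∧
      C ⊆ (fun z => x₀ + z) '' (Submodule.span ℝ (Set.range w) : Set H) := by
  set V₀ := (affineSpan ℝ C).direction with hV₀
  haveI : FiniteDimensional ℝ V₀ := by
    rw [FiniteDimensional, ← Module.rank_lt_aleph0_iff]
    exact hrank.trans_lt (Cardinal.nat_lt_aleph0 k)
  set m := Module.finrank ℝ V₀ with hm'
  have hm : m ≤ k := Module.finrank_le_of_rank_le hrank
  -- orthonormal basis of V₀, viewed in H
  set b0 := stdOrthonormalBasis ℝ V₀ with hb0
  set b : Fin m → H := fun i => (b0 i : H) with hbdef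
  have hb : Orthonormal ℝ b := b0.orthonormal.comp_linearIsometry V₀.subtypeₗᵢ
  have hbV : ∀ i, b i ∈ V₀ := fun i => (b0 i).2
  have hbspan : V₀ ≤ Submodule.span ℝ (Set.range b) := by
    have h1 : Set.range b = V₀.subtype '' Set.range b0 := by
      rw [← Set.range_comp]; rfl
    rw [h1, ← Submodule.map_span]
    have h2 : Submodule.span ℝ (Set.range ⇑b0) = ⊤ := by
      rw [← b0.coe_toBasis]; exact b0.toBasis.span_eq
    rw [h2, Submodule.map_top, Submodule.range_subtype]
  -- rank of the orthogonal complement is at least k - m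
  have hsup : V₀ ⊔ V₀ᗮ = ⊤ := Submodule.sup_orthogonal_of_hasOrthogonalProjection
  have hH : (k : Cardinal) ≤ (m : Cardinal) + Module.rank ℝ V₀ᗮ := by
    calc (k : Cardinal) ≤ Module.rank ℝ H := hdim
      _ = Module.rank ℝ ↥(V₀ ⊔ V₀ᗮ) := by rw [hsup]; exact (rank_top ℝ H).symm
      _ ≤ Module.rank ℝ V₀ + Module.rank ℝ V₀ᗮ := Submodule.rank_add_le_rank_add_rank _ _
      _ = (m : Cardinal) + Module.rank ℝ V₀ᗮ := by rw [Module.finrank_eq_rank]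
  have hle : ((k - m : ℕ) : Cardinal) ≤ Module.rank ℝ V₀ᗮ := by
    rcases lt_or_ge (Module.rank ℝ V₀ᗮ) Cardinal.aleph0 with hfin | hinf
    · obtain ⟨n, hn⟩ := Cardinal.lt_aleph0.mp hfin
      rw [hn] at hH ⊢
      rw [← Nat.cast_add, Nat.cast_le] at hH
      exact_mod_cast Nat.sub_le_iff_le_add'.mpr hH
    · exact le_trans (Cardinal.nat_lt_aleph0 _).le hinf
  obtain ⟨s, hcard, hsli⟩ :=
    le_rank_iff_exists_linearIndependent_finset.mp hle
  -- map to H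
  have hgli : LinearIndependent ℝ (fun v : ↥(s : Set ↥V₀ᗮ) => ((v : ↥V₀ᗮ) : H)) :=
    hsli.map' V₀ᗮ.subtype (Submodule.ker_subtype _)
  set S := Submodule.span ℝ (Set.range (fun v : ↥(s : Set ↥V₀ᗮ) => ((v : ↥V₀ᗮ) : H))) with hS
  have hSle : S ≤ V₀ᗮ := by
    rw [hS, Submodule.span_le]; rintro _ ⟨v, rfl⟩; exact (v : ↥V₀ᗮ).2
  haveI : FiniteDimensional ℝ S :=
    FiniteDimensional.span_of_finite ℝ (Set.finite_range _)
  have hfr : Module.finrank ℝ S = k - m := by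
    rw [hS, finrank_span_eq_card hgli]
    simp [hcard]
  set c0 := (stdOrthonormalBasis ℝ S).reindex (finCongr hfr) with hc0
  set c : Fin (k - m) → H := fun j => (c0 j : H) with hcdef
  have hc : Orthonormal ℝ c := c0.orthonormal.comp_linearIsometry S.subtypeₗᵢ
  have hcV : ∀ j, c j ∈ V₀ᗮ := fun j => hSle (c0 j).2
  -- combine
  set e : Fin m ⊕ Fin (k - m) ≃ Fin k :=
    finSumFinEquiv.trans (finCongr (Nat.add_sub_cancel' hm)) with he
  have hbc : Orthonormal ℝ (Sum.elim b c) := by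
    rw [orthonormal_iff_ite]
    rintro (i | i) (j | j)
    · simpa using orthonormal_iff_ite.mp hb i j
    · simpa using Submodule.inner_right_of_mem_orthogonal (hbV i) (hcV j)
    · simpa using Submodule.inner_left_of_mem_orthogonal (hbV j) (hcV i)
    · simpa using orthonormal_iff_ite.mp hc i j
  refine ⟨Sum.elim b c ∘ e.symm, hbc.comp e.symm e.symm.injective, ?_⟩
  have hrange : Set.range (Sum.elim b c ∘ e.symm) = Set.range b ∪ Set.range c := by
    rw [Set.range_comp, Set.range_eq_univ.mpr e.symm.surjective, Set.image_univ,
      Set.Sum.elim_range]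
  intro y hy
  have hyv : y - x₀ ∈ V₀ := by
    have := AffineSubspace.vsub_mem_direction
      (subset_affineSpan ℝ C hy) (subset_affineSpan ℝ C hx₀C)
    simpa [vsub_eq_sub] using this
  refine ⟨y - x₀, ?_, by simp⟩
  have h3 : Submodule.span ℝ (Set.range b) ≤
      Submodule.span ℝ (Set.range (Sum.elim b c ∘ e.symm)) := by
    rw [hrange]; exact Submodule.span_mono Set.subset_union_left
  exact h3 (hbspan hyv)


/-- If `Ũ` is an orthonormal family of cardinality `k` minimizing
`U ↦ E‖x − Π_{x₀+span U}(x)‖²` over orthonormal families (i.e. a standard PCA basis of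
the square-integrable `X`-valued random element `x`), and if `Π_{x₀+span Ũ}(x) ∈ X`
almost surely, then `C_Ũ = (x₀ + span Ũ) ∩ X` minimizes `K_X(C) = E d(x, C)²` over
`CC_{x₀,k}(X)`; i.e. the standard PCA solves the convex PCA problem. -/
theorem pca_solves_cpca_of_projection_mem
    {H : Type*} [NormedAddCommGroup H] [InnerProductSpace ℝ H] [CompleteSpace H]
    [SecondCountableTopology H]
    (k : ℕ) (hk : 1 ≤ k) (hdim : (k : Cardinal) ≤ Module.rank ℝ H)
    (X : Set H) (hXcl : IsClosed X) (hXconv : Convex ℝ X)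
    (x₀ : H) (hx₀ : x₀ ∈ X)
    {Ω : Type*} [MeasurableSpace Ω] (Q : Measure Ω) (hQ : IsProbabilityMeasure Q)
    (x : Ω → H) (hx2 : MemLp x 2 Q) (hxX : ∀ᵐ ω ∂Q, x ω ∈ X)
    (u : Fin k → H) (hu : Orthonormal ℝ u)
    (hmin : ∀ w : Fin k → H, Orthonormal ℝ w →
      ∫ ω, ‖x ω - projAff x₀ u (x ω)‖ ^ 2 ∂Q ≤ ∫ ω, ‖x ω - projAff x₀ w (x ω)‖ ^ 2 ∂Q)
    (hproj : ∀ᵐ ω ∂Q, projAff x₀ u (x ω) ∈ X) :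
    ∀ C : Set H, MemCC X x₀ k C →
      ∫ ω, Metric.infDist (x ω) (CU X x₀ u) ^ 2 ∂Q ≤
        ∫ ω, Metric.infDist (x ω) C ^ 2 ∂Q := by

  intro C hC
  obtain ⟨hCne, hCcl, hCX, hCconv, hx₀C, hCdim⟩ := hC
  obtain ⟨w, hw, hCsub⟩ := exists_orthonormal_superset k hdim x₀ C hx₀C hCdim
  have hxm : AEStronglyMeasurable x Q := hx2.aestronglyMeasurable
  -- dominating function
  have hg : Integrable (fun ω => ‖x ω - x₀‖ ^ 2) Q := by
    have h2 : MemLp (fun ω => x ω - x₀) 2 Q := hx2.sub (memLp_const x₀)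
    have := h2.integrable_norm_rpow (by norm_num) (by norm_num)
    simpa [ENNReal.toReal_ofNat, Real.rpow_natCast] using this
  have hx₀CU : x₀ ∈ CU X x₀ u := ⟨⟨0, Submodule.zero_mem _, by simp⟩, hx₀⟩
  have hx₀aff : x₀ ∈ (fun z => x₀ + z) '' (Submodule.span ℝ (Set.range w) : Set H) :=
    ⟨0, Submodule.zero_mem _, by simp⟩
  have hx₀affu : x₀ ∈ (fun z => x₀ + z) '' (Submodule.span ℝ (Set.range u) : Set H) :=
    ⟨0, Submodule.zero_mem _, by simp⟩
  -- continuity of projections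
  have hcontgen : ∀ {k : ℕ} (v : Fin k → H), Continuous (fun y : H => projAff x₀ v y) := by
    intro k v
    unfold projAff
    exact continuous_const.add (continuous_finset_sum _ fun i _ =>
      (((continuous_id.sub continuous_const).inner continuous_const)).smul continuous_const)
  have hcontw : Continuous (fun y : H => projAff x₀ w y) := hcontgen w
  have hcontu : Continuous (fun y : H => projAff x₀ u y) := hcontgen u
  -- integrability of the four functions
  have int_CU : Integrable (fun ω => Metric.infDist (x ω) (CU X x₀ u) ^ 2) Q := by
    refine hg.mono' (((Metric.continuous_infDist_pt _).pow 2).comp_aestronglyMeasurable hxm) ?_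
    filter_upwards with ω
    rw [Real.norm_of_nonneg (by positivity)]
    have h1 : Metric.infDist (x ω) (CU X x₀ u) ≤ ‖x ω - x₀‖ := by
      simpa [dist_eq_norm] using Metric.infDist_le_dist_of_mem hx₀CU
    exact pow_le_pow_left₀ Metric.infDist_nonneg h1 2
  have int_C : Integrable (fun ω => Metric.infDist (x ω) C ^ 2) Q := by
    refine hg.mono' (((Metric.continuous_infDist_pt _).pow 2).comp_aestronglyMeasurable hxm) ?_
    filter_upwards with ω
    rw [Real.norm_of_nonneg (by positivity)]
    have h1 : Metric.infDist (x ω) C ≤ ‖x ω - x₀‖ := by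
      simpa [dist_eq_norm] using Metric.infDist_le_dist_of_mem hx₀C
    exact pow_le_pow_left₀ Metric.infDist_nonneg h1 2
  have int_u : Integrable (fun ω => ‖x ω - projAff x₀ u (x ω)‖ ^ 2) Q := by
    refine hg.mono'
      ((((continuous_id.sub hcontu).norm).pow 2).comp_aestronglyMeasurable hxm) ?_
    filter_upwards with ω
    rw [Real.norm_of_nonneg (by positivity)]
    exact pow_le_pow_left₀ (norm_nonneg _)
      (norm_sub_projAff_le x₀ hu (x ω) x₀ hx₀affu) 2
  have int_w : Integrable (fun ω => ‖x ω - projAff x₀ w (x ω)‖ ^ 2) Q := by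
    refine hg.mono'
      ((((continuous_id.sub hcontw).norm).pow 2).comp_aestronglyMeasurable hxm) ?_
    filter_upwards with ω
    rw [Real.norm_of_nonneg (by positivity)]
    exact pow_le_pow_left₀ (norm_nonneg _)
      (norm_sub_projAff_le x₀ hw (x ω) x₀ hx₀aff) 2
  calc ∫ ω, Metric.infDist (x ω) (CU X x₀ u) ^ 2 ∂Q
      ≤ ∫ ω, ‖x ω - projAff x₀ u (x ω)‖ ^ 2 ∂Q := by
        refine integral_mono_ae int_CU int_u ?_
        filter_upwards [hproj] with ω hω
        have hmem : projAff x₀ u (x ω) ∈ CU X x₀ u := ⟨projAff_mem x₀ u (x ω), hω⟩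
        have h1 : Metric.infDist (x ω) (CU X x₀ u) ≤ ‖x ω - projAff x₀ u (x ω)‖ := by
          simpa [dist_eq_norm] using Metric.infDist_le_dist_of_mem hmem
        exact pow_le_pow_left₀ Metric.infDist_nonneg h1 2
    _ ≤ ∫ ω, ‖x ω - projAff x₀ w (x ω)‖ ^ 2 ∂Q := hmin w hw
    _ ≤ ∫ ω, Metric.infDist (x ω) C ^ 2 ∂Q := by
        refine integral_mono int_w int_C fun ω => ?_
        have h1 : ‖x ω - projAff x₀ w (x ω)‖ ≤ Metric.infDist (x ω) C := by
          by_contra hlt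
          rw [not_le, Metric.infDist_lt_iff hCne] at hlt
          obtain ⟨z, hzC, hzdist⟩ := hlt
          have := norm_sub_projAff_le x₀ hw (x ω) z (hCsub hzC)
          rw [dist_eq_norm] at hzdist
          linarith
        exact pow_le_pow_left₀ (norm_nonneg _) h1 2
end
end

section
/- Let (T, 𝒯, P) be a probability space and κ a Markov kernel from T to ℝ with ∫_T ∫_ℝ x² dκ_t(x) dP(t) < ∞, and let ν* ∈ W₂(ℝ) be the Fréchet mean of κ, the measure whose quantile function satisfies F_{ν*}⁻(y) = ∫_T F_{κ_t}⁻(y) dP(t) for all y ∈ (0,1). If for P-almost every t ∈ T the cumulative distribution function F_{κ_t} is continuous, then F_{ν*} is continuous (equivalently, y ↦ ∫_T F_{κ_t}⁻(y) dP(t) is strictly increasing on (0,1)). -/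
open MeasureTheory

noncomputable section

namespace FrechetAux

open Set Filter Topology ProbabilityTheory

variable (μ : Measure ℝ) [IsProbabilityMeasure μ]

lemma cdf'_eq : cdf' μ = ⇑(cdf μ) := by
  funext x; rw [cdf', cdf_eq_real, measureReal_def]

lemma cdf'_mono : Monotone (cdf' μ) := by rw [cdf'_eq]; exact monotone_cdf μ

variable {y : ℝ}

lemma S_nonempty (hy : y < 1) : {x : ℝ | y ≤ cdf' μ x}.Nonempty := by
  simp only [cdf'_eq]
  have h := (tendsto_cdf_atTop μ).eventually_const_lt hy
  obtain ⟨x, hx⟩ := h.exists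
  exact ⟨x, hx.le⟩

lemma S_bddBelow (hy : 0 < y) : BddBelow {x : ℝ | y ≤ cdf' μ x} := by
  simp only [cdf'_eq]
  have h := (tendsto_cdf_atBot μ).eventually_lt_const hy
  obtain ⟨x0, hx0⟩ := eventually_atBot.1 h
  refine ⟨x0, fun s hs => ?_⟩
  by_contra hlt
  exact absurd hs (not_le.2 (hx0 s (le_of_not_ge hlt)))

lemma le_cdf'_quantile (hy : y ∈ Set.Ioo (0:ℝ) 1) : y ≤ cdf' μ (quantile μ y) := by
  set q := quantile μ y with hq
  have hne := S_nonempty μ hy.2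
  have hgt : ∀ x, q < x → y ≤ cdf' μ x := by
    intro x hx
    obtain ⟨s, hs, hsx⟩ := exists_lt_of_csInf_lt hne hx
    exact le_trans hs (cdf'_mono μ hsx.le)
  have hrc : ContinuousWithinAt (cdf' μ) (Set.Ioi q) q := by
    rw [cdf'_eq]
    exact ((cdf μ).right_continuous q).mono Set.Ioi_subset_Ici_self
  have : ∀ᶠ x in 𝓝[>] q, y ≤ cdf' μ x :=
    eventually_nhdsWithin_of_forall (fun x hx => hgt x hx)
  exact ge_of_tendsto hrc this

lemma quantile_le_iff (hy : y ∈ Set.Ioo (0:ℝ) 1) {x : ℝ} :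
    quantile μ y ≤ x ↔ y ≤ cdf' μ x := by
  constructor
  · intro h
    exact le_trans (le_cdf'_quantile μ hy) (cdf'_mono μ h)
  · intro h
    exact csInf_le (S_bddBelow μ hy.1) h

lemma quantile_mono {y₁ y₂ : ℝ} (hy₁ : y₁ ∈ Set.Ioo (0:ℝ) 1) (hy₂ : y₂ ∈ Set.Ioo (0:ℝ) 1)
    (h : y₁ ≤ y₂) : quantile μ y₁ ≤ quantile μ y₂ :=
  (quantile_le_iff μ hy₁).2 (le_trans h (le_cdf'_quantile μ hy₂))

lemma cdf'_quantile (hy : y ∈ Set.Ioo (0:ℝ) 1) (hc : Continuous (cdf' μ)) :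
    cdf' μ (quantile μ y) = y := by
  refine le_antisymm ?_ (le_cdf'_quantile μ hy)
  by_contra hlt
  push_neg at hlt
  set q := quantile μ y with hqdef
  have hev : ∀ᶠ x in 𝓝 q, y < cdf' μ x :=
    (hc.continuousAt (x := q)).eventually_const_lt hlt
  have hev' : ∀ᶠ x in 𝓝[<] q, y < cdf' μ x ∧ x ∈ Set.Iio q :=
    (hev.filter_mono nhdsWithin_le_nhds).and self_mem_nhdsWithin
  obtain ⟨x, hx, hxq⟩ := hev'.exists
  have : q ≤ x := csInf_le (S_bddBelow μ hy.1) hx.le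
  exact absurd hxq (not_lt.2 this)

lemma quantile_strictMono {y₁ y₂ : ℝ} (hy₁ : y₁ ∈ Set.Ioo (0:ℝ) 1) (hy₂ : y₂ ∈ Set.Ioo (0:ℝ) 1)
    (h : y₁ < y₂) (hc : Continuous (cdf' μ)) : quantile μ y₁ < quantile μ y₂ := by
  by_contra hle
  push_neg at hle
  have := cdf'_mono μ hle
  rw [cdf'_quantile μ hy₁ hc, cdf'_quantile μ hy₂ hc] at this
  exact absurd this (not_le.2 h)

lemma abs_quantile_le (hy : y ∈ Set.Ioo (0:ℝ) 1)
    (hM : ∫⁻ x, ENNReal.ofReal (x ^ 2) ∂μ ≠ ⊤) :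
    |quantile μ y| ≤ (∫⁻ x, ENNReal.ofReal (x ^ 2) ∂μ).toReal * (1/(1-y) + 1/y) + 1 := by
  set m := (∫⁻ x, ENNReal.ofReal (x ^ 2) ∂μ).toReal with hm
  have hm0 : 0 ≤ m := ENNReal.toReal_nonneg
  have hy0 : 0 < y := hy.1
  have h1y : 0 < 1 - y := by linarith [hy.2]
  have key : ∀ B : ℝ, 1 ≤ B → ∀ s : Set ℝ, MeasurableSet s → (∀ x ∈ s, B ^ 2 ≤ x ^ 2) →
      ∀ c : ℝ, 0 < c → ENNReal.ofReal c ≤ μ s → B ≤ m / c := by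
    intro B hB1 s hs hBs c hc hcs
    have hB0 : 0 ≤ B := le_trans zero_le_one hB1
    have h1 : ENNReal.ofReal (B ^ 2) * ENNReal.ofReal c ≤ ∫⁻ x, ENNReal.ofReal (x ^ 2) ∂μ := by
      calc ENNReal.ofReal (B ^ 2) * ENNReal.ofReal c ≤ ENNReal.ofReal (B ^ 2) * μ s :=
            mul_le_mul_right hcs _
        _ = ∫⁻ _ in s, ENNReal.ofReal (B ^ 2) ∂μ := by rw [setLIntegral_const]
        _ ≤ ∫⁻ x in s, ENNReal.ofReal (x ^ 2) ∂μ :=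
            setLIntegral_mono (by measurability) (fun x hx => ENNReal.ofReal_le_ofReal (hBs x hx))
        _ ≤ ∫⁻ x, ENNReal.ofReal (x ^ 2) ∂μ := setLIntegral_le_lintegral _ _
    rw [← ENNReal.ofReal_mul (by positivity)] at h1
    have h2 : B ^ 2 * c ≤ m := by
      rw [hm]
      exact (ENNReal.ofReal_le_iff_le_toReal hM).1 h1
    have h3 : B * c ≤ m := by nlinarith
    rw [le_div_iff₀ hc]; exact h3
  rw [abs_le]
  constructor
  · rw [neg_le]
    by_contra hgt
    push_neg at hgt
    set B := m * (1 / (1 - y) + 1 / y) + 1 with hB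
    have hB1 : 1 ≤ B := by
      rw [hB]
      have : 0 ≤ m * (1 / (1 - y) + 1 / y) := by positivity
      linarith
    have hq' : quantile μ y < -B := by linarith
    obtain ⟨s, hsS, hsB⟩ := exists_lt_of_csInf_lt (S_nonempty μ hy.2) hq'
    have hμs : ENNReal.ofReal y ≤ μ (Set.Iic s) := by
      rw [ENNReal.ofReal_le_iff_le_toReal (measure_ne_top μ _)]
      exact hsS
    have hBle : B ≤ m / y :=
      key B hB1 (Set.Iic s) measurableSet_Iic
        (fun x hx => by
          have hxB : B ≤ -x := by
            have : x ≤ s := hx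
            linarith [hsB]
          have : B ^ 2 ≤ (-x) ^ 2 := pow_le_pow_left₀ (by linarith) hxB 2
          simpa using this)
        y hy0 hμs
    have : m / y ≤ m * (1 / (1 - y) + 1 / y) := by
      rw [div_eq_mul_one_div]
      have : 0 ≤ m * (1 / (1 - y)) := by positivity
      nlinarith
    linarith
  · by_contra hgt
    push_neg at hgt
    set B := m * (1 / (1 - y) + 1 / y) + 1 with hB
    have hB1 : 1 ≤ B := by
      rw [hB]
      have : 0 ≤ m * (1 / (1 - y) + 1 / y) := by positivity
      linarith
    have hBnot : B ∉ {x : ℝ | y ≤ cdf' μ x} := by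
      intro hmem
      exact absurd (csInf_le (S_bddBelow μ hy.1) hmem) (not_le.2 hgt)
    have hFB : cdf' μ B < y := lt_of_not_ge hBnot
    have hμs : ENNReal.ofReal (1 - y) ≤ μ (Set.Ioi B) := by
      have hcompl : μ (Set.Ioi B) = 1 - μ (Set.Iic B) := by
        rw [← Set.compl_Iic, measure_compl measurableSet_Iic (measure_ne_top μ _), measure_univ]
      have hlt : μ (Set.Iic B) < ENNReal.ofReal y := by
        rw [ENNReal.lt_ofReal_iff_toReal_lt (measure_ne_top μ _)]
        exact hFB
      rw [hcompl]
      calc ENNReal.ofReal (1 - y) = 1 - ENNReal.ofReal y := by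
            rw [ENNReal.ofReal_sub _ hy0.le, ENNReal.ofReal_one]
        _ ≤ 1 - μ (Set.Iic B) := tsub_le_tsub_left hlt.le 1
    have hBle : B ≤ m / (1 - y) :=
      key B hB1 (Set.Ioi B) measurableSet_Ioi
        (fun x hx => pow_le_pow_left₀ (le_trans zero_le_one hB1) (le_of_lt hx) 2)
        (1 - y) h1y hμs
    have : m / (1 - y) ≤ m * (1 / (1 - y) + 1 / y) := by
      rw [div_eq_mul_one_div]
      have : 0 ≤ m * (1 / y) := by positivity
      nlinarith
    linarith

lemma measurable_quantile_kernel {T : Type*} [MeasurableSpace T]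
    (κ : ProbabilityTheory.Kernel T ℝ) [ProbabilityTheory.IsMarkovKernel κ]
    (hy : y ∈ Set.Ioo (0:ℝ) 1) :
    Measurable (fun t => quantile (κ t) y) := by
  apply measurable_of_Iic
  intro x
  have heq : (fun t => quantile (κ t) y) ⁻¹' Set.Iic x
      = {t | ENNReal.ofReal y ≤ κ t (Set.Iic x)} := by
    ext t
    simp only [Set.mem_preimage, Set.mem_Iic, Set.mem_setOf_eq]
    rw [quantile_le_iff (κ t) hy]
    unfold cdf'
    exact (ENNReal.ofReal_le_iff_le_toReal (measure_ne_top _ _)).symm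
  rw [heq]
  exact measurableSet_le measurable_const (κ.measurable_coe measurableSet_Iic)

end FrechetAux

/-- If the random cdf `F_{κ_t}` is continuous for `P`-almost every `t`, then the cdf
of the Fréchet mean `ν*` (characterized by `F_{ν*}⁻(y) = ∫ F_{κ_t}⁻(y) dP(t)` on
`(0,1)`) is continuous. -/
theorem frechet_mean_cdf_continuous
    {T : Type*} [MeasurableSpace T] (P : Measure T) (hP : IsProbabilityMeasure P)
    (κ : ProbabilityTheory.Kernel T ℝ) (hκ : ProbabilityTheory.IsMarkovKernel κ)
    (hmom : ∫⁻ t, ∫⁻ x, ENNReal.ofReal (x ^ 2) ∂(κ t) ∂P < ⊤)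
    (νs : Measure ℝ) (hνs : MemW2 νs)
    (hq : ∀ y ∈ Set.Ioo (0 : ℝ) 1, quantile νs y = ∫ t, quantile (κ t) y ∂P)
    (hcont : ∀ᵐ t ∂P, Continuous (cdf' (κ t))) :
    Continuous (cdf' νs) := by
  classical
  haveI : IsProbabilityMeasure νs := hνs.1
  open FrechetAux ProbabilityTheory Set Filter Topology in
  -- measurability of the moment function
  have hMmeas : Measurable (fun t => ∫⁻ x, ENNReal.ofReal (x ^ 2) ∂(κ t)) := by
    exact Measurable.lintegral_kernel ((measurable_id.pow_const 2).ennreal_ofReal)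
  have hae_fin : ∀ᵐ t ∂P, ∫⁻ x, ENNReal.ofReal (x ^ 2) ∂(κ t) ≠ ⊤ :=
    (ae_lt_top hMmeas hmom.ne).mono fun t ht => ht.ne
  -- integrability of the random quantiles
  have hint : ∀ y ∈ Set.Ioo (0:ℝ) 1, Integrable (fun t => quantile (κ t) y) P := by
    intro y hy
    set C : ℝ := 1/(1-y) + 1/y with hC
    have hg : Integrable (fun t => (∫⁻ x, ENNReal.ofReal (x ^ 2) ∂(κ t)).toReal * C + 1) P := by
      refine Integrable.add ?_ (integrable_const 1)
      exact (integrable_toReal_of_lintegral_ne_top hMmeas.aemeasurable hmom.ne).mul_const C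
    refine hg.mono' (FrechetAux.measurable_quantile_kernel κ hy).aestronglyMeasurable ?_
    filter_upwards [hae_fin] with t ht
    rw [Real.norm_eq_abs]
    exact FrechetAux.abs_quantile_le (κ t) hy ht
  -- strict monotonicity of the quantile function of νs
  have hstrict : ∀ y₁ y₂ : ℝ, y₁ ∈ Set.Ioo (0:ℝ) 1 → y₂ ∈ Set.Ioo (0:ℝ) 1 → y₁ < y₂ →
      quantile νs y₁ < quantile νs y₂ := by
    intro y₁ y₂ hy₁ hy₂ h12
    rw [hq y₁ hy₁, hq y₂ hy₂]
    set f := fun t => quantile (κ t) y₁ with hf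
    set g := fun t => quantile (κ t) y₂ with hgdef
    have hif := hint y₁ hy₁
    have hig := hint y₂ hy₂
    have hle : ∀ t, f t ≤ g t := fun t =>
      FrechetAux.quantile_mono (κ t) hy₁ hy₂ h12.le
    have hltae : ∀ᵐ t ∂P, f t < g t := by
      filter_upwards [hcont] with t ht
      exact FrechetAux.quantile_strictMono (κ t) hy₁ hy₂ h12 ht
    have hnn : 0 ≤ᵐ[P] fun t => g t - f t :=
      Filter.Eventually.of_forall fun t => sub_nonneg.2 (hle t)
    have hsubint : Integrable (fun t => g t - f t) P := hig.sub hif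
    have hpos : 0 < ∫ t, (g t - f t) ∂P := by
      rcases lt_or_eq_of_le (integral_nonneg_of_ae hnn) with h | h
      · exact h
      · exfalso
        have hzero : (fun t => g t - f t) =ᵐ[P] 0 :=
          (integral_eq_zero_iff_of_nonneg_ae hnn hsubint).1 h.symm
        haveI : (MeasureTheory.ae P).NeBot := ae_neBot.2 (IsProbabilityMeasure.ne_zero P)
        obtain ⟨t, ht1, ht2⟩ := (hltae.and hzero).exists
        simp only [Pi.zero_apply, sub_eq_zero] at ht2
        exact ht1.ne' ht2
    have := integral_sub hig hif
    have h2 : ∫ t, (g t - f t) ∂P = ∫ t, g t ∂P - ∫ t, f t ∂P := this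
    linarith
  -- νs is atomless
  have hatom : ∀ x : ℝ, νs {x} = 0 := by
    intro x
    by_contra hne
    have habx : νs (Set.Iic x) = νs (Set.Iio x) + νs {x} := by
      rw [← Set.Iio_union_right,
        measure_union (by simp [Set.disjoint_singleton_right]) (measurableSet_singleton x)]
    set a := (νs (Set.Iio x)).toReal with ha
    set b := cdf' νs x with hb
    have hab : a < b := by
      rw [hb, cdf', habx, ENNReal.toReal_add (measure_ne_top _ _) (measure_ne_top _ _)]
      have : 0 < (νs {x}).toReal :=
        ENNReal.toReal_pos hne (measure_ne_top _ _)
      linarith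
    have ha0 : 0 ≤ a := ENNReal.toReal_nonneg
    have hb1 : b ≤ 1 := by
      rw [hb, cdf']
      exact ENNReal.toReal_le_of_le_ofReal zero_le_one (by simpa using prob_le_one)
    have claim : ∀ y : ℝ, a < y → y ≤ b → y ∈ Set.Ioo (0:ℝ) 1 → quantile νs y = x := by
      intro y hay hyb hyIoo
      apply le_antisymm
      · exact csInf_le (FrechetAux.S_bddBelow νs hyIoo.1) hyb
      · apply le_csInf (FrechetAux.S_nonempty νs hyIoo.2)
        intro s hs
        by_contra hsx
        push_neg at hsx
        have hcs : cdf' νs s ≤ a :=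
          ENNReal.toReal_mono (measure_ne_top _ _) (measure_mono (Set.Iic_subset_Iio.2 hsx))
        have : y ≤ cdf' νs s := hs
        linarith
    set y₁ := a + (b - a)/3 with hy1
    set y₂ := a + 2*(b - a)/3 with hy2
    have hy₁I : y₁ ∈ Set.Ioo (0:ℝ) 1 := ⟨by rw [hy1]; linarith, by rw [hy1]; linarith⟩
    have hy₂I : y₂ ∈ Set.Ioo (0:ℝ) 1 := ⟨by rw [hy2]; linarith, by rw [hy2]; linarith⟩
    have h1 : quantile νs y₁ = x := claim y₁ (by rw [hy1]; linarith) (by rw [hy1]; linarith) hy₁I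
    have h2 : quantile νs y₂ = x := claim y₂ (by rw [hy2]; linarith) (by rw [hy2]; linarith) hy₂I
    have := hstrict y₁ y₂ hy₁I hy₂I (by rw [hy1, hy2]; linarith)
    rw [h1, h2] at this
    exact lt_irrefl x this
  -- atomless implies continuous cdf
  rw [FrechetAux.cdf'_eq νs]
  rw [continuous_iff_continuousAt]
  intro x
  rw [(ProbabilityTheory.cdf νs).mono.continuousAt_iff_leftLim_eq_rightLim]
  have hright : Function.rightLim (⇑(ProbabilityTheory.cdf νs)) x = ProbabilityTheory.cdf νs x := by
    rw [← (ProbabilityTheory.cdf νs).mono.continuousWithinAt_Ioi_iff_rightLim_eq]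
    exact ((ProbabilityTheory.cdf νs).right_continuous x).mono Set.Ioi_subset_Ici_self
  have hleft : Function.leftLim (⇑(ProbabilityTheory.cdf νs)) x = ProbabilityTheory.cdf νs x := by
    have hm : (ProbabilityTheory.cdf νs).measure {x} = 0 := by
      rw [ProbabilityTheory.measure_cdf]; exact hatom x
    rw [StieltjesFunction.measure_singleton] at hm
    have h1 : ProbabilityTheory.cdf νs x - Function.leftLim (⇑(ProbabilityTheory.cdf νs)) x ≤ 0 := by
      simpa [ENNReal.ofReal_eq_zero] using hm
    have h2 : Function.leftLim (⇑(ProbabilityTheory.cdf νs)) x ≤ ProbabilityTheory.cdf νs x :=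
      (ProbabilityTheory.cdf νs).mono.leftLim_le le_rfl
    linarith
  rw [hleft, hright]
end
end
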